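/- arXiv:0906.2638 — 2 statements merged into one kernel-verified Lean document; each statement's English description precedes it below -/
import Mathlib

section
/- Let Ω ⊆ ℂ be a nonempty bounded open connected set and let h : Ω → ℝ be a harmonic function. Then the function |h| : Ω → ℝ is not proper; that is, there exists a compact set C ⊆ ℝ whose preimage under |h| is not compact. -/
open Complex Metric

/-- A real-valued function `h` is harmonic on a set `U ⊆ ℂ`: it is twice continuously
differentiable on `U` and its Laplacian (sum of the two pure second directional
derivatives, in the directions `1` and `i`) vanishes at every point of `U`. -/
def HarmOn (h : ℂ → ℝ) (U : Set ℂ) : Prop :=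
  ContDiffOn ℝ 2 h U ∧ ∀ z ∈ U,
    iteratedDeriv 2 (fun t : ℝ => h (z + (t : ℂ))) 0 +
      iteratedDeriv 2 (fun t : ℝ => h (z + (t : ℂ) * Complex.I)) 0 = 0

/-- A map into the Euclidean plane is harmonic on `U` iff both coordinate functions are. -/
def HarmMapOn (f : ℂ → EuclideanSpace ℝ (Fin 2)) (U : Set ℂ) : Prop :=
  HarmOn (fun z => f z 0) U ∧ HarmOn (fun z => f z 1) U


open MeasureTheory Metric Set Filter

/-- FTC: integral of the derivative of a compactly supported C¹ function vanishes. -/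
lemma integral_deriv_zero {u : ℝ → ℝ} (h1 : Differentiable ℝ u) (h2 : Continuous (deriv u))
    (hc : HasCompactSupport u) : ∫ x, deriv u x = 0 := by
  obtain ⟨R, hR⟩ := hc.isBounded.subset_closedBall 0
  set S := |R| + 1 with hS
  have hRS : R ≤ S := by
    have := le_abs_self R; simp [hS]; linarith
  have hout : ∀ x : ℝ, ¬ (|x| ≤ R) → u x = 0 := by
    intro x hx
    apply image_eq_zero_of_notMem_tsupport
    intro h
    exact hx (by simpa [Real.dist_eq] using hR h)
  have hR' : tsupport u ⊆ Set.Icc (-S) S := by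
    intro x hx
    have : |x| ≤ R := by simpa [Real.dist_eq] using hR hx
    rcases abs_le.1 (le_trans this hRS) with ⟨ha, hb⟩
    exact ⟨ha, hb⟩
  have hsupp : ∀ x ∉ Set.Icc (-S) S, deriv u x = 0 := by
    intro x hx
    have hx' : x ∉ tsupport u := fun h => hx (hR' h)
    apply image_eq_zero_of_notMem_tsupport
    intro h
    exact hx' (closure_minimal (support_deriv_subset (f := u)) (isClosed_tsupport u) h)
  have hSpos : 0 < S := by positivity
  have h0 : u (-S) = 0 := by
    apply hout; rw [abs_neg, _root_.abs_of_nonneg hSpos.le]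
    intro hcon
    have := le_abs_self R; simp [hS] at hcon; linarith
  have h0' : u S = 0 := by
    apply hout; rw [_root_.abs_of_nonneg hSpos.le]
    intro hcon
    have := le_abs_self R; simp [hS] at hcon; linarith
  have key : ∫ x in (-S)..S, deriv u x = u S - u (-S) := by
    apply intervalIntegral.integral_deriv_eq_sub' u rfl (fun x _ => h1 x)
    exact h2.continuousOn
  have heq : ∫ x, deriv u x = ∫ x in (-S)..S, deriv u x := by
    rw [intervalIntegral.integral_of_le (by linarith : -S ≤ S)]
    rw [← MeasureTheory.integral_Icc_eq_integral_Ioc]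
    exact (setIntegral_eq_integral_of_forall_compl_eq_zero (fun x hx => hsupp x hx)).symm
  rw [heq, key, h0, h0']; ring

/-- derivative along a line. -/
lemma hasDerivAt_line {F : ℂ → ℝ} {w : ℂ} (hF : DifferentiableAt ℝ F w) (c v : ℂ) (x : ℝ)
    (hw : w = c + x • v) : HasDerivAt (fun s : ℝ => F (c + s • v)) (fderiv ℝ F w v) x := by
  subst hw
  have hL : HasDerivAt (fun s : ℝ => c + s • v) v x := by
    simpa using ((hasDerivAt_id x).smul_const v).const_add c
  have := hF.hasFDerivAt.comp_hasDerivAt x hL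
  simpa [Function.comp_def] using this

open MeasureTheory Metric Set Filter Complex

/-- fderiv vanishes outside tsupport -/
lemma fderiv_eq_zero_outside {F : ℂ → ℝ} {z : ℂ} (hz : z ∉ tsupport F) : fderiv ℝ F z = 0 := by
  have hz0 : F =ᶠ[nhds z] (fun _ => (0:ℝ)) := by
    have : (tsupport F)ᶜ ∈ nhds z := (isClosed_tsupport F).isOpen_compl.mem_nhds hz
    filter_upwards [this] with w hw using image_eq_zero_of_notMem_tsupport hw
  rw [hz0.fderiv_eq, fderiv_fun_const]
  rfl

/-- Integral over ℂ of a directional derivative (direction 1 or I) of a C¹ compactly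
supported function vanishes. -/
lemma integral_fderiv_dir_zero (F : ℂ → ℝ) (hF : ContDiff ℝ 1 F) (hc : HasCompactSupport F)
    (v : ℂ) (hv : v = 1 ∨ v = Complex.I) :
    ∫ z : ℂ, fderiv ℝ F z v = 0 := by
  have hFd : Differentiable ℝ F := hF.differentiable one_ne_zero
  have hfd_cont : Continuous fun z => fderiv ℝ F z v := by
    have := (hF.fderiv_right (m := 0) le_rfl).continuous
    exact (ContinuousLinearMap.apply ℝ ℝ v).continuous.comp this
  have hfd_supp : HasCompactSupport fun z => fderiv ℝ F z v := by
    apply HasCompactSupport.intro hc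
    intro z hz
    rw [fderiv_eq_zero_outside hz]; rfl
  have hint : Integrable (fun z => fderiv ℝ F z v) :=
    hfd_cont.integrable_of_hasCompactSupport hfd_supp
  have hmp := Complex.volume_preserving_equiv_real_prod.symm
  have htrans : ∫ z : ℂ, fderiv ℝ F z v =
      ∫ p : ℝ × ℝ, fderiv ℝ F (Complex.measurableEquivRealProd.symm p) v := by
    rw [← hmp.integral_comp Complex.measurableEquivRealProd.symm.measurableEmbedding
      (fun z => fderiv ℝ F z v)]
  rw [htrans]
  have hintP : Integrable (fun p : ℝ × ℝ => fderiv ℝ F (Complex.measurableEquivRealProd.symm p) v)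
      ((volume : Measure ℝ).prod volume) :=
    (hmp.integrable_comp_emb Complex.measurableEquivRealProd.symm.measurableEmbedding).2 hint
  -- key 1D fact
  have key : ∀ (c w : ℂ), w = 1 ∨ w = Complex.I →
      ∫ s : ℝ, fderiv ℝ F (c + s • w) w = 0 := by
    intro c w hw
    have hdiff : Differentiable ℝ (fun s : ℝ => F (c + s • w)) := by
      intro x
      exact ((hFd _).hasFDerivAt.comp_hasDerivAt x
        (by simpa using ((hasDerivAt_id x).smul_const w).const_add c)).differentiableAt
    have hderiv : deriv (fun s : ℝ => F (c + s • w)) = fun s => fderiv ℝ F (c + s • w) w := by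
      funext x
      exact HasDerivAt.deriv (by
        have hL : HasDerivAt (fun s : ℝ => c + s • w) w x := by
          simpa using ((hasDerivAt_id x).smul_const w).const_add c
        simpa [Function.comp_def] using (hFd (c + x • w)).hasFDerivAt.comp_hasDerivAt x hL)
    have hcs : HasCompactSupport (fun s : ℝ => F (c + s • w)) := by
      obtain ⟨R, hR⟩ := hc.isBounded.subset_closedBall 0
      have : Function.support (fun s : ℝ => F (c + s • w)) ⊆
          Set.Icc (-(R + ‖c‖ + 1)) (R + ‖c‖ + 1) := by
        intro s hs
        have h1 : (c + s • w) ∈ tsupport F := subset_tsupport _ hs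
        have h2 : ‖c + s • w‖ ≤ R := by simpa [Real.dist_eq] using hR h1
        have hw1 : ‖w‖ = 1 := by rcases hw with h | h <;> simp [h]
        have habs : |s| = ‖s • w‖ := by rw [norm_smul, hw1, mul_one]; simp
        have h3 : ‖s • w‖ ≤ R + ‖c‖ := by
          have : ‖s • w‖ = ‖(c + s • w) - c‖ := by congr 1; ring
          rw [this]
          calc ‖(c + s • w) - c‖ ≤ ‖c + s • w‖ + ‖c‖ := norm_sub_le _ _
          _ ≤ R + ‖c‖ := by linarith
        have h4 : |s| ≤ R + ‖c‖ := by rw [habs]; exact h3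
        rcases abs_le.1 h4 with ⟨ha, hb⟩
        exact ⟨by linarith, by linarith⟩
      apply HasCompactSupport.of_support_subset_isCompact isCompact_Icc this
    have hcont2 : Continuous fun s : ℝ => fderiv ℝ F (c + s • w) w := by
      have hline : Continuous fun s : ℝ => c + s • w := by continuity
      exact ((ContinuousLinearMap.apply ℝ ℝ w).continuous.comp
        ((hF.fderiv_right (m := 0) le_rfl).continuous)).comp hline
    have := integral_deriv_zero hdiff (by rw [hderiv]; exact hcont2) hcs
    rwa [hderiv] at this
  rcases hv with rfl | rfl
  · -- direction 1 : inner integral over x with y fixed; use integral_prod_symm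
    rw [MeasureTheory.Measure.volume_eq_prod, MeasureTheory.integral_prod_symm _ hintP]
    have : ∀ y : ℝ, ∫ x : ℝ, fderiv ℝ F (Complex.measurableEquivRealProd.symm (x, y)) 1 = 0 := by
      intro y
      have := key ((y : ℂ) * Complex.I) 1 (Or.inl rfl)
      rw [← this]
      apply integral_congr_ae; filter_upwards with x
      have hpt : (Complex.measurableEquivRealProd.symm (x, y)) =
          ((y : ℂ) * Complex.I + x • (1 : ℂ)) := by
        apply Complex.ext <;> simp
      rw [hpt]
    simp only [this, integral_zero]
  · -- direction I : inner integral over y with x fixed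
    rw [MeasureTheory.Measure.volume_eq_prod, MeasureTheory.integral_prod _ hintP]
    have : ∀ x : ℝ, ∫ y : ℝ, fderiv ℝ F (Complex.measurableEquivRealProd.symm (x, y)) Complex.I = 0 := by
      intro x
      have := key (x : ℂ) Complex.I (Or.inr rfl)
      rw [← this]
      apply integral_congr_ae; filter_upwards with y
      have hpt : (Complex.measurableEquivRealProd.symm (x, y)) =
          ((x : ℂ) + y • Complex.I) := by
        apply Complex.ext <;> simp
      rw [hpt]
    simp only [this, integral_zero]

/-- second derivative along a line equals iterated fderiv pairing -/
lemma iteratedDeriv_two_line {h : ℂ → ℝ} {Ω : Set ℂ} (hopen : IsOpen Ω)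
    (hh : ContDiffOn ℝ 2 h Ω) {z : ℂ} (hz : z ∈ Ω) (v : ℂ) :
    iteratedDeriv 2 (fun t : ℝ => h (z + t • v)) 0
      = fderiv ℝ (fun w => fderiv ℝ h w v) z v := by
  have hCA : ∀ w ∈ Ω, ContDiffAt ℝ 2 h w := fun w hw => hh.contDiffAt (hopen.mem_nhds hw)
  have hdiff : ∀ w ∈ Ω, DifferentiableAt ℝ h w := fun w hw =>
    ((hCA w hw).differentiableAt (by norm_num))
  have hHv : ContDiffAt ℝ 1 (fun w => fderiv ℝ h w v) z := by
    have := (hCA z hz).fderiv_right (m := 1) (by norm_num)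
    exact (ContinuousLinearMap.apply ℝ ℝ v).contDiff.contDiffAt.comp z this
  have hU : IsOpen {t : ℝ | z + t • v ∈ Ω} :=
    (hopen.preimage (by continuity : Continuous fun t : ℝ => z + t • v))
  have h0U : (0:ℝ) ∈ {t : ℝ | z + t • v ∈ Ω} := by simp [hz]
  have hev : deriv (fun t : ℝ => h (z + t • v)) =ᶠ[nhds (0:ℝ)]
      fun t => fderiv ℝ h (z + t • v) v := by
    filter_upwards [hU.mem_nhds h0U] with t ht
    exact (hasDerivAt_line (hdiff _ ht) z v t rfl).deriv
  have h2 : iteratedDeriv 2 (fun t : ℝ => h (z + t • v)) 0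
      = deriv (deriv (fun t : ℝ => h (z + t • v))) 0 := by
    rw [show (2:ℕ) = 1 + 1 from rfl, iteratedDeriv_succ, iteratedDeriv_one]
  rw [h2, hev.deriv_eq]
  have := hasDerivAt_line (F := fun w => fderiv ℝ h w v)
    (hHv.differentiableAt one_ne_zero) z v 0 (by simp)
  exact this.deriv

/-- the Laplacian in fderiv form vanishes for HarmOn functions -/
lemma laplace_fderiv_zero {h : ℂ → ℝ} {Ω : Set ℂ} (hopen : IsOpen Ω)
    (hh : HarmOn h Ω) {z : ℂ} (hz : z ∈ Ω) :
    fderiv ℝ (fun w => fderiv ℝ h w 1) z 1 + fderiv ℝ (fun w => fderiv ℝ h w Complex.I) z Complex.I = 0 := by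
  have key := hh.2 z hz
  have e1 : (fun t : ℝ => h (z + (t : ℂ))) = fun t : ℝ => h (z + t • (1:ℂ)) := by
    funext t; simp
  have e2 : (fun t : ℝ => h (z + (t : ℂ) * Complex.I)) = fun t : ℝ => h (z + t • Complex.I) := by
    funext t; rw [Complex.real_smul]
  rw [e1, e2] at key
  rw [iteratedDeriv_two_line hopen hh.1 hz 1, iteratedDeriv_two_line hopen hh.1 hz Complex.I] at key
  exact key

noncomputable section PsiSection

def bφ : ContDiffBump (0:ℝ) := ⟨1, 2, one_pos, one_lt_two⟩

lemma bφ_cont : Continuous (bφ : ℝ → ℝ) := bφ.continuous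
lemma bφ_nonneg (x : ℝ) : 0 ≤ bφ x := bφ.nonneg
lemma bφ_zero {x : ℝ} (hx : 2 ≤ |x|) : bφ x = 0 := by
  apply bφ.zero_of_le_dist
  simpa [Real.dist_eq, bφ] using hx

def Itot : ℝ := ∫ y : ℝ, bφ y

lemma Itot_pos : 0 < Itot := bφ.integral_pos

def Phi (s : ℝ) : ℝ := ∫ y in (-3:ℝ)..s, bφ y

lemma Phi_hasDeriv (s : ℝ) : HasDerivAt Phi (bφ s) s := by
  apply intervalIntegral.integral_hasDerivAt_right
  · exact bφ_cont.intervalIntegrable _ _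
  · exact bφ_cont.stronglyMeasurableAtFilter _ _
  · exact bφ_cont.continuousAt

lemma Phi_cont : Continuous Phi := by
  have : Differentiable ℝ Phi := fun s => (Phi_hasDeriv s).differentiableAt
  exact this.continuous

lemma Phi_mono {a b : ℝ} (hab : a ≤ b) : Phi a ≤ Phi b := by
  have hsplit : Phi a + ∫ y in a..b, bφ y = Phi b :=
    intervalIntegral.integral_add_adjacent_intervals
      (bφ_cont.intervalIntegrable _ _) (bφ_cont.intervalIntegrable _ _)
  have hnn : 0 ≤ ∫ y in a..b, bφ y :=
    intervalIntegral.integral_nonneg hab (fun x _ => bφ_nonneg x)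
  linarith

lemma Phi_zero {s : ℝ} (hs : s ≤ -2) : Phi s = 0 := by
  rw [Phi]
  rw [intervalIntegral.integral_congr (g := fun _ => (0:ℝ))]
  · simp
  · intro x hx
    rcases Set.mem_uIcc.1 hx with ⟨h1, h2⟩ | ⟨h1, h2⟩
    · exact bφ_zero (by rw [_root_.abs_of_nonpos (by linarith)]; linarith)
    · exact bφ_zero (by rw [_root_.abs_of_nonpos (by linarith)]; linarith)

lemma Phi_top {s : ℝ} (hs : 2 ≤ s) : Phi s = Itot := by
  have h1 : Phi s = ∫ y in Set.Ioc (-3:ℝ) s, bφ y := by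
    rw [Phi, intervalIntegral.integral_of_le (by linarith : (-3:ℝ) ≤ s)]
  rw [h1, Itot]
  apply setIntegral_eq_integral_of_forall_compl_eq_zero
  intro x hx
  simp only [Set.mem_Ioc, not_and_or, not_lt, not_le] at hx
  rcases hx with hx | hx
  · exact bφ_zero (by rw [_root_.abs_of_nonpos (by linarith)]; linarith)
  · exact bφ_zero (by rw [_root_.abs_of_nonneg (by linarith)]; linarith)

lemma Phi_nonneg (s : ℝ) : 0 ≤ Phi s := by
  rcases le_or_gt s (-2) with hs | hs
  · rw [Phi_zero hs]
  · have := Phi_mono (le_of_lt (by linarith : (-3:ℝ) < s))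
    rwa [show Phi (-3) = 0 from Phi_zero (by norm_num)] at this

variable (t d : ℝ)

def gfun (y : ℝ) : ℝ := Phi (y - t) - Phi (y - t - d)

def psi (x : ℝ) : ℝ := ∫ y in x..(x + d), gfun t d y

def A1 (x : ℝ) : ℝ := Phi (x + d - t) - 2 * Phi (x - t) + Phi (x - t - d)

def chi (x : ℝ) : ℝ := bφ (x + d - t) - 2 * bφ (x - t) + bφ (x - t - d)

lemma gfun_cont : Continuous (gfun t d) := by
  unfold gfun
  exact (Phi_cont.comp (continuous_id.sub continuous_const)).sub
    (Phi_cont.comp ((continuous_id.sub continuous_const).sub continuous_const))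

lemma gfun_nonneg (hd : 0 ≤ d) (y : ℝ) : 0 ≤ gfun t d y := by
  have := Phi_mono (by linarith : y - t - d ≤ y - t)
  unfold gfun; linarith

lemma psi_hasDeriv (x : ℝ) : HasDerivAt (psi t d) (A1 t d x) x := by
  have hG : ∀ u : ℝ, HasDerivAt (fun u => ∫ y in (0:ℝ)..u, gfun t d y) (gfun t d u) u := by
    intro u
    apply intervalIntegral.integral_hasDerivAt_right
    · exact (gfun_cont t d).intervalIntegrable _ _
    · exact (gfun_cont t d).stronglyMeasurableAtFilter _ _
    · exact (gfun_cont t d).continuousAt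
  have hrep : psi t d = fun x => (∫ y in (0:ℝ)..(x + d), gfun t d y) - ∫ y in (0:ℝ)..x, gfun t d y := by
    funext x
    have := intervalIntegral.integral_add_adjacent_intervals
      ((gfun_cont t d).intervalIntegrable (μ := MeasureTheory.volume) 0 x)
      ((gfun_cont t d).intervalIntegrable (μ := MeasureTheory.volume) x (x + d))
    rw [psi]; linarith
  rw [hrep]
  have h1 : HasDerivAt (fun x : ℝ => ∫ y in (0:ℝ)..(x + d), gfun t d y) (gfun t d (x + d)) x := by
    have := (hG (x + d)).comp x ((hasDerivAt_id x).add_const d)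
    simpa [Function.comp_def] using this
  have h2 := (h1.sub (hG x))
  have : gfun t d (x + d) - gfun t d x = A1 t d x := by
    unfold gfun A1
    have e1 : x + d - t - d = x - t := by ring
    rw [e1]; ring
  rwa [this] at h2

lemma A1_hasDeriv (x : ℝ) : HasDerivAt (A1 t d) (chi t d x) x := by
  have h1 : HasDerivAt (fun x : ℝ => Phi (x + d - t)) (bφ (x + d - t)) x := by
    have h := (Phi_hasDeriv (x + (d - t))).comp x ((hasDerivAt_id x).add_const (d - t))
    have e : x + (d - t) = x + d - t := by ring
    rw [e] at h
    have efun : (fun x : ℝ => Phi (x + d - t)) = Phi ∘ (fun x : ℝ => id x + (d - t)) := by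
      funext u; simp [Function.comp]; ring_nf
    rw [efun]; simpa using h
  have h2 : HasDerivAt (fun x : ℝ => Phi (x - t)) (bφ (x - t)) x := by
    have h := (Phi_hasDeriv (x - t)).comp x ((hasDerivAt_id x).sub_const t)
    simpa [Function.comp_def] using h
  have h3 : HasDerivAt (fun x : ℝ => Phi (x - t - d)) (bφ (x - t - d)) x := by
    have h := (Phi_hasDeriv (x - (t + d))).comp x ((hasDerivAt_id x).sub_const (t + d))
    have e : x - (t + d) = x - t - d := by ring
    rw [e] at h
    have efun : (fun x : ℝ => Phi (x - t - d)) = Phi ∘ (fun x : ℝ => id x - (t + d)) := by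
      funext u; simp [Function.comp]; ring_nf
    rw [efun]; simpa using h
  unfold A1 chi
  exact (h1.sub (h2.const_mul 2)).add h3

lemma psi_contDiff : ContDiff ℝ 1 (psi t d) := by
  rw [contDiff_one_iff_deriv]
  constructor
  · exact fun x => (psi_hasDeriv t d x).differentiableAt
  · have : deriv (psi t d) = A1 t d := funext fun x => (psi_hasDeriv t d x).deriv
    rw [this]; unfold A1
    exact ((Phi_cont.comp (by continuity)).sub
      (continuous_const.mul (Phi_cont.comp (by continuity)))).add
      (Phi_cont.comp (by continuity))

lemma A1_contDiff : ContDiff ℝ 1 (A1 t d) := by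
  rw [contDiff_one_iff_deriv]
  constructor
  · exact fun x => (A1_hasDeriv t d x).differentiableAt
  · have : deriv (A1 t d) = chi t d := funext fun x => (A1_hasDeriv t d x).deriv
    rw [this]; unfold chi
    exact ((bφ_cont.comp (by continuity)).sub
      (continuous_const.mul (bφ_cont.comp (by continuity)))).add
      (bφ_cont.comp (by continuity))

lemma chi_cont : Continuous (chi t d) := by
  unfold chi
  exact ((bφ_cont.comp (by continuity)).sub
    (continuous_const.mul (bφ_cont.comp (by continuity)))).add (bφ_cont.comp (by continuity))

lemma psi_nonneg (hd : 0 ≤ d) (x : ℝ) : 0 ≤ psi t d x :=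
  intervalIntegral.integral_nonneg (by linarith) (fun y _ => gfun_nonneg t d hd y)

lemma psi_zero_of_far (hd : 0 ≤ d) {x : ℝ} (hx : t + d + 2 ≤ x ∨ x ≤ t - d - 2) :
    psi t d x = 0 := by
  rw [psi, intervalIntegral.integral_congr (g := fun _ => (0:ℝ))]
  · simp
  · intro y hy
    have hy' : x ≤ y ∧ y ≤ x + d := by
      rcases Set.mem_uIcc.1 hy with ⟨h1, h2⟩ | ⟨h1, h2⟩
      · exact ⟨h1, h2⟩
      · constructor <;> linarith
    unfold gfun
    rcases hx with hx | hx
    · rw [Phi_top (by linarith : (2:ℝ) ≤ y - t), Phi_top (by linarith : (2:ℝ) ≤ y - t - d)]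
      ring
    · rw [Phi_zero (by linarith : y - t ≤ -2), Phi_zero (by linarith : y - t - d ≤ -2)]
      ring

lemma A1_zero_of_far (hd : 0 ≤ d) {x : ℝ} (hx : t + d + 2 ≤ x ∨ x ≤ t - d - 2) :
    A1 t d x = 0 := by
  unfold A1
  rcases hx with hx | hx
  · rw [Phi_top (by linarith : (2:ℝ) ≤ x + d - t), Phi_top (by linarith : (2:ℝ) ≤ x - t),
      Phi_top (by linarith : (2:ℝ) ≤ x - t - d)]
    ring
  · rw [Phi_zero (by linarith : x + d - t ≤ -2), Phi_zero (by linarith : x - t ≤ -2),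
      Phi_zero (by linarith : x - t - d ≤ -2)]
    ring

lemma psi_big (hd : 6 ≤ d) {x : ℝ} (hx : |x - t| ≤ 1) : (d - 4) * Itot ≤ psi t d x := by
  rcases abs_le.1 hx with ⟨hx1, hx2⟩
  have hle1 : x ≤ t + 2 := by linarith
  have hle2 : t + d - 2 ≤ x + d := by linarith
  have hmid : ∫ y in (t+2)..(t+d-2), gfun t d y = (d - 4) * Itot := by
    rw [intervalIntegral.integral_congr (g := fun _ => Itot)]
    · rw [intervalIntegral.integral_const, smul_eq_mul]
      congr 1; ring
    · intro y hy
      have hy' : t + 2 ≤ y ∧ y ≤ t + d - 2 := by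
        rcases Set.mem_uIcc.1 hy with ⟨h1, h2⟩ | ⟨h1, h2⟩
        · exact ⟨h1, h2⟩
        · constructor <;> linarith
      unfold gfun
      rw [Phi_top (by linarith : (2:ℝ) ≤ y - t), Phi_zero (by linarith : y - t - d ≤ -2)]
      ring
  have hsplit1 : ∫ y in x..(x+d), gfun t d y =
      (∫ y in x..(t+2), gfun t d y) + ∫ y in (t+2)..(x+d), gfun t d y :=
    (intervalIntegral.integral_add_adjacent_intervals
      ((gfun_cont t d).intervalIntegrable _ _) ((gfun_cont t d).intervalIntegrable _ _)).symm
  have hsplit2 : ∫ y in (t+2)..(x+d), gfun t d y =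
      (∫ y in (t+2)..(t+d-2), gfun t d y) + ∫ y in (t+d-2)..(x+d), gfun t d y :=
    (intervalIntegral.integral_add_adjacent_intervals
      ((gfun_cont t d).intervalIntegrable _ _) ((gfun_cont t d).intervalIntegrable _ _)).symm
  have hnn1 : 0 ≤ ∫ y in x..(t+2), gfun t d y :=
    intervalIntegral.integral_nonneg hle1 (fun y _ => gfun_nonneg t d (by linarith) y)
  have hnn2 : 0 ≤ ∫ y in (t+d-2)..(x+d), gfun t d y :=
    intervalIntegral.integral_nonneg hle2 (fun y _ => gfun_nonneg t d (by linarith) y)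
  rw [psi, hsplit1, hsplit2, hmid]
  linarith

lemma chi_abs_le (x : ℝ) : |chi t d x| ≤ bφ (x + d - t) + 2 * bφ (x - t) + bφ (x - t - d) := by
  have n1 := bφ_nonneg (x + d - t)
  have n2 := bφ_nonneg (x - t)
  have n3 := bφ_nonneg (x - t - d)
  unfold chi
  rw [abs_le]
  constructor <;> [linarith; linarith]

end PsiSection

noncomputable section QSection

variable (z₀ : ℂ) (ε : ℝ)

def Nf (z : ℂ) : ℝ := (z - z₀).re ^ 2 + (z - z₀).im ^ 2 + ε ^ 2
def Qf (z : ℂ) : ℝ := Real.log (Nf z₀ ε z) / 2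
def Qx (z : ℂ) : ℝ := (z - z₀).re / Nf z₀ ε z
def Qy (z : ℂ) : ℝ := (z - z₀).im / Nf z₀ ε z
def Pf (z : ℂ) : ℝ := 2 * ε ^ 2 / (Nf z₀ ε z) ^ 2

lemma Nf_pos (hε : 0 < ε) (z : ℂ) : 0 < Nf z₀ ε z := by
  have h0 : 0 < ε ^ 2 := pow_pos hε 2
  have h1 : 0 ≤ (z - z₀).re ^ 2 := sq_nonneg _
  have h2 : 0 ≤ (z - z₀).im ^ 2 := sq_nonneg _
  unfold Nf; linarith

lemma hre_cd : ContDiff ℝ 1 (fun z : ℂ => (z - z₀).re) :=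
  Complex.reCLM.contDiff.comp (contDiff_id.sub contDiff_const)

lemma him_cd : ContDiff ℝ 1 (fun z : ℂ => (z - z₀).im) :=
  Complex.imCLM.contDiff.comp (contDiff_id.sub contDiff_const)

lemma Nf_cd : ContDiff ℝ 1 (Nf z₀ ε) := by
  unfold Nf
  exact (((hre_cd z₀).pow 2).add ((him_cd z₀).pow 2)).add contDiff_const

lemma Qf_cd (hε : 0 < ε) : ContDiff ℝ 1 (Qf z₀ ε) := by
  unfold Qf
  exact ((Nf_cd z₀ ε).log (fun z => (Nf_pos z₀ ε hε z).ne')).div_const 2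

lemma Qx_cd (hε : 0 < ε) : ContDiff ℝ 1 (Qx z₀ ε) :=
  (hre_cd z₀).div (Nf_cd z₀ ε) (fun z => (Nf_pos z₀ ε hε z).ne')

lemma Qy_cd (hε : 0 < ε) : ContDiff ℝ 1 (Qy z₀ ε) :=
  (him_cd z₀).div (Nf_cd z₀ ε) (fun z => (Nf_pos z₀ ε hε z).ne')

lemma Pf_cont (hε : 0 < ε) : Continuous (Pf z₀ ε) := by
  unfold Pf
  exact continuous_const.div (((Nf_cd z₀ ε).continuous).pow 2)
    (fun z => pow_ne_zero 2 (Nf_pos z₀ ε hε z).ne')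

lemma Pf_pos (hε : 0 < ε) (z : ℂ) : 0 < Pf z₀ ε z := by
  have h := Nf_pos z₀ ε hε z
  have h2 : 0 < ε ^ 2 := pow_pos hε 2
  unfold Pf
  positivity

/-- uniqueness transfer: compute directional fderiv from a 1D derivative -/
lemma fderiv_dir_eq {F : ℂ → ℝ} {z : ℂ} (hF : DifferentiableAt ℝ F z) (v : ℂ) {c : ℝ}
    (hc : HasDerivAt (fun s : ℝ => F (z + s • v)) c 0) : fderiv ℝ F z v = c := by
  have h := hasDerivAt_line hF z v 0 (by simp)
  exact h.unique hc

lemma line_re_one (z : ℂ) (s : ℝ) : (z + s • (1:ℂ) - z₀).re = (z - z₀).re + s := by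
  simp; ring
lemma line_im_one (z : ℂ) (s : ℝ) : (z + s • (1:ℂ) - z₀).im = (z - z₀).im := by simp
lemma line_re_I (z : ℂ) (s : ℝ) : (z + s • Complex.I - z₀).re = (z - z₀).re := by simp
lemma line_im_I (z : ℂ) (s : ℝ) : (z + s • Complex.I - z₀).im = (z - z₀).im + s := by
  simp; ring

lemma affine_sq_hasDeriv (a c : ℝ) : HasDerivAt (fun s : ℝ => (a + s) ^ 2 + c) (2 * (a + 0)) 0 := by
  have h1 : HasDerivAt (fun s : ℝ => a + s) 1 0 := (hasDerivAt_id 0).const_add a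
  have h2 := (h1.pow 2).add_const c
  have : ((2:ℕ) : ℝ) * (a + 0) ^ (2 - 1) * 1 = 2 * (a + 0) := by norm_num
  rwa [this] at h2

lemma Qf_dir_one (hε : 0 < ε) (z : ℂ) : fderiv ℝ (Qf z₀ ε) z 1 = Qx z₀ ε z := by
  apply fderiv_dir_eq (((Qf_cd z₀ ε hε).differentiable one_ne_zero) z)
  have hfun : (fun s : ℝ => Qf z₀ ε (z + s • (1:ℂ)))
      = fun s : ℝ => Real.log (((z - z₀).re + s) ^ 2 + ((z - z₀).im ^ 2 + ε ^ 2)) / 2 := by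
    funext s
    unfold Qf Nf
    rw [line_re_one z₀ z s, line_im_one z₀ z s]
    ring_nf
  rw [hfun]
  have hN := affine_sq_hasDeriv (z - z₀).re ((z - z₀).im ^ 2 + ε ^ 2)
  have hpos : ((z - z₀).re + 0) ^ 2 + ((z - z₀).im ^ 2 + ε ^ 2) ≠ 0 := by
    have h0 : 0 < ε ^ 2 := pow_pos hε 2
    have := sq_nonneg ((z - z₀).re + 0); have := sq_nonneg (z - z₀).im
    intro hcon; linarith [hcon.ge, hcon.le]
  have hfin := (hN.log hpos).div_const 2
  refine hfin.congr_deriv ?_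
  unfold Qx Nf
  have hNpos := Nf_pos z₀ ε hε z
  have hd : ((z - z₀).re + 0) ^ 2 + ((z - z₀).im ^ 2 + ε ^ 2)
      = (z - z₀).re ^ 2 + (z - z₀).im ^ 2 + ε ^ 2 := by ring
  rw [hd]
  unfold Nf at hNpos
  field_simp
  ring

lemma Qf_dir_I (hε : 0 < ε) (z : ℂ) : fderiv ℝ (Qf z₀ ε) z Complex.I = Qy z₀ ε z := by
  apply fderiv_dir_eq (((Qf_cd z₀ ε hε).differentiable one_ne_zero) z)
  have hfun : (fun s : ℝ => Qf z₀ ε (z + s • Complex.I))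
      = fun s : ℝ => Real.log (((z - z₀).im + s) ^ 2 + ((z - z₀).re ^ 2 + ε ^ 2)) / 2 := by
    funext s
    unfold Qf Nf
    rw [line_re_I z₀ z s, line_im_I z₀ z s]
    ring_nf
  rw [hfun]
  have hN := affine_sq_hasDeriv (z - z₀).im ((z - z₀).re ^ 2 + ε ^ 2)
  have hpos : ((z - z₀).im + 0) ^ 2 + ((z - z₀).re ^ 2 + ε ^ 2) ≠ 0 := by
    have h0 : 0 < ε ^ 2 := pow_pos hε 2
    have := sq_nonneg ((z - z₀).im + 0); have := sq_nonneg (z - z₀).re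
    intro hcon; linarith [hcon.ge, hcon.le]
  have hfin := (hN.log hpos).div_const 2
  refine hfin.congr_deriv ?_
  unfold Qy Nf
  have hNpos := Nf_pos z₀ ε hε z
  have hd : ((z - z₀).im + 0) ^ 2 + ((z - z₀).re ^ 2 + ε ^ 2)
      = (z - z₀).re ^ 2 + (z - z₀).im ^ 2 + ε ^ 2 := by ring
  rw [hd]
  unfold Nf at hNpos
  field_simp
  ring

lemma affine_hasDeriv (a : ℝ) : HasDerivAt (fun s : ℝ => a + s) 1 0 := (hasDerivAt_id 0).const_add a

lemma Qx_dir_one (hε : 0 < ε) (z : ℂ) : fderiv ℝ (Qx z₀ ε) z 1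
    = (Nf z₀ ε z - 2 * (z - z₀).re ^ 2) / (Nf z₀ ε z) ^ 2 := by
  apply fderiv_dir_eq (((Qx_cd z₀ ε hε).differentiable one_ne_zero) z)
  have hfun : (fun s : ℝ => Qx z₀ ε (z + s • (1:ℂ)))
      = fun s : ℝ => ((z - z₀).re + s) / (((z - z₀).re + s) ^ 2 + ((z - z₀).im ^ 2 + ε ^ 2)) := by
    funext s
    unfold Qx Nf
    rw [line_re_one z₀ z s, line_im_one z₀ z s]
    ring_nf
  rw [hfun]
  have h1 := affine_hasDeriv (z - z₀).re
  have hN := affine_sq_hasDeriv (z - z₀).re ((z - z₀).im ^ 2 + ε ^ 2)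
  have hpos : ((z - z₀).re + 0) ^ 2 + ((z - z₀).im ^ 2 + ε ^ 2) ≠ 0 := by
    have h0 : 0 < ε ^ 2 := pow_pos hε 2
    have := sq_nonneg ((z - z₀).re + 0); have := sq_nonneg (z - z₀).im
    intro hcon; linarith [hcon.ge, hcon.le]
  have hfin := h1.div hN hpos
  refine hfin.congr_deriv ?_
  unfold Nf
  have hNpos := Nf_pos z₀ ε hε z
  unfold Nf at hNpos
  have hd : ((z - z₀).re + 0) ^ 2 + ((z - z₀).im ^ 2 + ε ^ 2)
      = (z - z₀).re ^ 2 + (z - z₀).im ^ 2 + ε ^ 2 := by ring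
  rw [hd]
  field_simp
  ring

lemma Qy_dir_I (hε : 0 < ε) (z : ℂ) : fderiv ℝ (Qy z₀ ε) z Complex.I
    = (Nf z₀ ε z - 2 * (z - z₀).im ^ 2) / (Nf z₀ ε z) ^ 2 := by
  apply fderiv_dir_eq (((Qy_cd z₀ ε hε).differentiable one_ne_zero) z)
  have hfun : (fun s : ℝ => Qy z₀ ε (z + s • Complex.I))
      = fun s : ℝ => ((z - z₀).im + s) / (((z - z₀).im + s) ^ 2 + ((z - z₀).re ^ 2 + ε ^ 2)) := by
    funext s
    unfold Qy Nf
    rw [line_re_I z₀ z s, line_im_I z₀ z s]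
    ring_nf
  rw [hfun]
  have h1 := affine_hasDeriv (z - z₀).im
  have hN := affine_sq_hasDeriv (z - z₀).im ((z - z₀).re ^ 2 + ε ^ 2)
  have hpos : ((z - z₀).im + 0) ^ 2 + ((z - z₀).re ^ 2 + ε ^ 2) ≠ 0 := by
    have h0 : 0 < ε ^ 2 := pow_pos hε 2
    have := sq_nonneg ((z - z₀).im + 0); have := sq_nonneg (z - z₀).re
    intro hcon; linarith [hcon.ge, hcon.le]
  have hfin := h1.div hN hpos
  refine hfin.congr_deriv ?_
  unfold Nf
  have hNpos := Nf_pos z₀ ε hε z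
  unfold Nf at hNpos
  have hd : ((z - z₀).im + 0) ^ 2 + ((z - z₀).re ^ 2 + ε ^ 2)
      = (z - z₀).re ^ 2 + (z - z₀).im ^ 2 + ε ^ 2 := by ring
  rw [hd]
  field_simp
  ring

lemma Q_laplacian (hε : 0 < ε) (z : ℂ) :
    fderiv ℝ (Qx z₀ ε) z 1 + fderiv ℝ (Qy z₀ ε) z Complex.I = Pf z₀ ε z := by
  rw [Qx_dir_one z₀ ε hε z, Qy_dir_I z₀ ε hε z]
  have hNpos := Nf_pos z₀ ε hε z
  unfold Pf Nf
  unfold Nf at hNpos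
  field_simp
  ring

end QSection

section Helpers

open MeasureTheory

/-- continuity and support facts for indicator extensions -/
lemma indicator_continuous {Ω : Set ℂ} {f : ℂ → ℝ} {K : Set ℂ}
    (hΩ : IsOpen Ω) (hK : IsCompact K) (hKΩ : K ⊆ Ω)
    (hf : ∀ z ∈ Ω, ContinuousAt f z) (hsupp : ∀ z ∈ Ω, z ∉ K → f z = 0) :
    Continuous (Ω.indicator f) := by
  rw [continuous_iff_continuousAt]
  intro z
  by_cases hz : z ∈ Ω
  · have hev : Ω.indicator f =ᶠ[nhds z] f := by
      filter_upwards [hΩ.mem_nhds hz] with w hw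
      simp [Set.indicator_of_mem hw]
    exact (hf z hz).congr hev.symm
  · have hzK : z ∉ K := fun hk => hz (hKΩ hk)
    have hev : Ω.indicator f =ᶠ[nhds z] (fun _ => 0) := by
      filter_upwards [hK.isClosed.isOpen_compl.mem_nhds hzK] with w hw
      by_cases hwΩ : w ∈ Ω
      · simp [Set.indicator_of_mem hwΩ, hsupp w hwΩ hw]
      · simp [Set.indicator_of_notMem hwΩ]
    exact continuousAt_const.congr hev.symm

lemma indicator_support_subset {Ω : Set ℂ} {f : ℂ → ℝ} {K : Set ℂ}
    (hsupp : ∀ z ∈ Ω, z ∉ K → f z = 0) :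
    Function.support (Ω.indicator f) ⊆ K := by
  intro z hz
  by_contra hzK
  by_cases hzΩ : z ∈ Ω
  · exact hz (by simp [Set.indicator_of_mem hzΩ, hsupp z hzΩ hzK])
  · exact hz (by simp [Set.indicator_of_notMem hzΩ])

lemma indicator_hasCompactSupport {Ω : Set ℂ} {f : ℂ → ℝ} {K : Set ℂ}
    (hK : IsCompact K) (hsupp : ∀ z ∈ Ω, z ∉ K → f z = 0) :
    HasCompactSupport (Ω.indicator f) :=
  HasCompactSupport.of_support_subset_isCompact hK (indicator_support_subset hsupp)

lemma indicator_integrable {Ω : Set ℂ} {f : ℂ → ℝ} {K : Set ℂ}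
    (hΩ : IsOpen Ω) (hK : IsCompact K) (hKΩ : K ⊆ Ω)
    (hf : ∀ z ∈ Ω, ContinuousAt f z) (hsupp : ∀ z ∈ Ω, z ∉ K → f z = 0) :
    IntegrableOn f Ω := by
  have h1 : Continuous (Ω.indicator f) := indicator_continuous hΩ hK hKΩ hf hsupp
  have h2 : HasCompactSupport (Ω.indicator f) := indicator_hasCompactSupport hK hsupp
  have h3 : Integrable (Ω.indicator f) := h1.integrable_of_hasCompactSupport h2
  rwa [integrable_indicator_iff hΩ.measurableSet] at h3

lemma indicator_integral {Ω : Set ℂ} {f : ℂ → ℝ}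
    (hΩ : IsOpen Ω) :
    ∫ z, Ω.indicator f z = ∫ z in Ω, f z := integral_indicator hΩ.measurableSet

/-- key divergence-theorem corollary: for a C¹ vector field with compact support,
the integral of its divergence vanishes -/
lemma integral_div_comps_zero (F1 F2 : ℂ → ℝ) (h1 : ContDiff ℝ 1 F1) (h2 : ContDiff ℝ 1 F2)
    (hc1 : HasCompactSupport F1) (hc2 : HasCompactSupport F2) :
    ∫ z : ℂ, (fderiv ℝ F1 z 1 + fderiv ℝ F2 z Complex.I) = 0 := by
  have hi1 : Integrable (fun z => fderiv ℝ F1 z 1) := by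
    apply Continuous.integrable_of_hasCompactSupport
    · exact (ContinuousLinearMap.apply ℝ ℝ (1:ℂ)).continuous.comp
        ((h1.fderiv_right (m := 0) le_rfl).continuous)
    · apply HasCompactSupport.intro hc1
      intro z hz
      rw [fderiv_eq_zero_outside hz]; rfl
  have hi2 : Integrable (fun z => fderiv ℝ F2 z Complex.I) := by
    apply Continuous.integrable_of_hasCompactSupport
    · exact (ContinuousLinearMap.apply ℝ ℝ (Complex.I)).continuous.comp
        ((h2.fderiv_right (m := 0) le_rfl).continuous)
    · apply HasCompactSupport.intro hc2
      intro z hz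
      rw [fderiv_eq_zero_outside hz]; rfl
  rw [integral_add hi1 hi2,
    integral_fderiv_dir_zero F1 h1 hc1 1 (Or.inl rfl),
    integral_fderiv_dir_zero F2 h2 hc2 Complex.I (Or.inr rfl)]
  ring

end Helpers

section Identities

open MeasureTheory

variable {Ω : Set ℂ} {h : ℂ → ℝ}

lemma chi_zero_of_far (t d : ℝ) (hd : 6 ≤ d) {x : ℝ} (hx : t + d + 2 ≤ x ∨ x ≤ t - d - 2) :
    chi t d x = 0 := by
  unfold chi
  rcases hx with hx | hx
  · rw [bφ_zero (by rw [_root_.abs_of_nonneg (by linarith)]; linarith),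
      bφ_zero (by rw [_root_.abs_of_nonneg (by linarith)]; linarith),
      bφ_zero (by rw [_root_.abs_of_nonneg (by linarith)]; linarith)]
    ring
  · rw [bφ_zero (by rw [_root_.abs_of_nonpos (by linarith)]; linarith),
      bφ_zero (by rw [_root_.abs_of_nonpos (by linarith)]; linarith),
      bφ_zero (by rw [_root_.abs_of_nonpos (by linarith)]; linarith)]
    ring

lemma far_of_not_mem {t d x : ℝ} (hx : x ∉ Set.Icc (t - d - 3) (t + d + 3)) :
    t + d + 2 ≤ x ∨ x ≤ t - d - 2 := by
  simp only [Set.mem_Icc, not_and_or, not_le] at hx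
  rcases hx with hx | hx
  · right; linarith
  · left; linarith

/-- Setup bundle for the divergence identities. -/
structure IdSetup (Ω : Set ℂ) (h : ℂ → ℝ) : Prop where
  hopen : IsOpen Ω
  hh : HarmOn h Ω
  hKcpt : ∀ a b : ℝ, IsCompact {z : ℂ | z ∈ Ω ∧ h z ∈ Set.Icc a b}

lemma IdSetup.hCA (S : IdSetup Ω h) : ∀ w ∈ Ω, ContDiffAt ℝ 2 h w :=
  fun w hw => S.hh.1.contDiffAt (S.hopen.mem_nhds hw)

lemma IdSetup.hdiffh (S : IdSetup Ω h) : ∀ w ∈ Ω, DifferentiableAt ℝ h w :=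
  fun w hw => (S.hCA w hw).differentiableAt (by norm_num)

lemma IdSetup.hH1 (S : IdSetup Ω h) :
    ∀ w ∈ Ω, ContDiffAt ℝ 1 (fun u => fderiv ℝ h u 1) w := fun w hw =>
  (ContinuousLinearMap.apply ℝ ℝ (1:ℂ)).contDiff.contDiffAt.comp w
    ((S.hCA w hw).fderiv_right (m := 1) (by norm_num))

lemma IdSetup.hH2 (S : IdSetup Ω h) :
    ∀ w ∈ Ω, ContDiffAt ℝ 1 (fun u => fderiv ℝ h u Complex.I) w := fun w hw =>
  (ContinuousLinearMap.apply ℝ ℝ (Complex.I)).contDiff.contDiffAt.comp w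
    ((S.hCA w hw).fderiv_right (m := 1) (by norm_num))

/-- Identity A : `∫_Ω χ(h)|∇h|² = 0`. -/
lemma identityA (S : IdSetup Ω h) (t d : ℝ) (hd : 6 ≤ d) :
    ∫ z in Ω, chi t d (h z) * ((fderiv ℝ h z 1)^2 + (fderiv ℝ h z Complex.I)^2) = 0 := by
  classical
  set H1 : ℂ → ℝ := fun u => fderiv ℝ h u 1 with hH1def
  set H2 : ℂ → ℝ := fun u => fderiv ℝ h u Complex.I with hH2def
  set K : Set ℂ := {z : ℂ | z ∈ Ω ∧ h z ∈ Set.Icc (t - d - 3) (t + d + 3)} with hKdef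
  have hK : IsCompact K := S.hKcpt _ _
  have hKΩ : K ⊆ Ω := fun z hz => hz.1
  set f1 : ℂ → ℝ := fun z => A1 t d (h z) * H1 z with hf1def
  set f2 : ℂ → ℝ := fun z => A1 t d (h z) * H2 z with hf2def
  have hfar : ∀ z ∈ Ω, z ∉ K → (A1 t d (h z) = 0 ∧ chi t d (h z) = 0) := by
    intro z hz hzK
    have : h z ∉ Set.Icc (t - d - 3) (t + d + 3) := fun hmem => hzK ⟨hz, hmem⟩
    have hfar' := far_of_not_mem this
    exact ⟨A1_zero_of_far t d (by linarith) hfar', chi_zero_of_far t d hd hfar'⟩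
  -- C¹ smoothness of indicator fields
  have hsmooth : ∀ (g : ℂ → ℝ), (∀ w ∈ Ω, ContDiffAt ℝ 1 g w) →
      ContDiff ℝ 1 (Ω.indicator (fun z => A1 t d (h z) * g z)) := by
    intro g hg
    rw [contDiff_iff_contDiffAt]
    intro z
    by_cases hz : z ∈ Ω
    · have hev : Ω.indicator (fun z => A1 t d (h z) * g z) =ᶠ[nhds z]
          (fun z => A1 t d (h z) * g z) := by
        filter_upwards [S.hopen.mem_nhds hz] with w hw
        simp [Set.indicator_of_mem hw]
      have hform : ContDiffAt ℝ 1 (fun z => A1 t d (h z) * g z) z :=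
        (((A1_contDiff t d).contDiffAt).comp z ((S.hCA z hz).of_le (by norm_num))).mul (hg z hz)
      exact hform.congr_of_eventuallyEq hev
    · have hzK : z ∉ K := fun hk => hz (hKΩ hk)
      have hev : Ω.indicator (fun z => A1 t d (h z) * g z) =ᶠ[nhds z] (fun _ => 0) := by
        filter_upwards [hK.isClosed.isOpen_compl.mem_nhds hzK] with w hw
        by_cases hwΩ : w ∈ Ω
        · simp [Set.indicator_of_mem hwΩ, (hfar w hwΩ hw).1]
        · simp [Set.indicator_of_notMem hwΩ]
      exact contDiffAt_const.congr_of_eventuallyEq hev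
  have hs1 : ContDiff ℝ 1 (Ω.indicator f1) := hsmooth H1 S.hH1
  have hs2 : ContDiff ℝ 1 (Ω.indicator f2) := hsmooth H2 S.hH2
  have hc1 : HasCompactSupport (Ω.indicator f1) :=
    indicator_hasCompactSupport hK (fun z hz hzK => by
      simp [hf1def, (hfar z hz hzK).1])
  have hc2 : HasCompactSupport (Ω.indicator f2) :=
    indicator_hasCompactSupport hK (fun z hz hzK => by
      simp [hf2def, (hfar z hz hzK).1])
  -- pointwise divergence
  have hdiv : ∀ z : ℂ, fderiv ℝ (Ω.indicator f1) z 1 + fderiv ℝ (Ω.indicator f2) z Complex.I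
      = Ω.indicator (fun z => chi t d (h z) * (H1 z ^ 2 + H2 z ^ 2)) z := by
    intro z
    by_cases hz : z ∈ Ω
    · have hev1 : Ω.indicator f1 =ᶠ[nhds z] f1 := by
        filter_upwards [S.hopen.mem_nhds hz] with w hw
        simp [Set.indicator_of_mem hw]
      have hev2 : Ω.indicator f2 =ᶠ[nhds z] f2 := by
        filter_upwards [S.hopen.mem_nhds hz] with w hw
        simp [Set.indicator_of_mem hw]
      rw [hev1.fderiv_eq, hev2.fderiv_eq, Set.indicator_of_mem hz]
      have hA1h : HasFDerivAt (fun w => A1 t d (h w))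
          (chi t d (h z) • fderiv ℝ h z) z :=
        (A1_hasDeriv t d (h z)).comp_hasFDerivAt z (S.hdiffh z hz).hasFDerivAt
      have hH1' : HasFDerivAt H1 (fderiv ℝ H1 z) z :=
        ((S.hH1 z hz).differentiableAt one_ne_zero).hasFDerivAt
      have hH2' : HasFDerivAt H2 (fderiv ℝ H2 z) z :=
        ((S.hH2 z hz).differentiableAt one_ne_zero).hasFDerivAt
      have hp1 := (hA1h.mul hH1').fderiv
      have hp2 := (hA1h.mul hH2').fderiv
      rw [hf1def, hf2def]
      calc fderiv ℝ (fun z => A1 t d (h z) * H1 z) z 1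
            + fderiv ℝ (fun z => A1 t d (h z) * H2 z) z Complex.I
          = (A1 t d (h z) • fderiv ℝ H1 z + H1 z • (chi t d (h z) • fderiv ℝ h z)) 1
            + (A1 t d (h z) • fderiv ℝ H2 z + H2 z • (chi t d (h z) • fderiv ℝ h z)) Complex.I := by
            rw [← hp1, ← hp2]; rfl
        _ = A1 t d (h z) * (fderiv ℝ H1 z 1 + fderiv ℝ H2 z Complex.I)
            + chi t d (h z) * (H1 z * H1 z + H2 z * H2 z) := by
            simp [ContinuousLinearMap.add_apply, ContinuousLinearMap.smul_apply, smul_eq_mul,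
              hH1def, hH2def]
            ring
        _ = chi t d (h z) * (H1 z ^ 2 + H2 z ^ 2) := by
            rw [laplace_fderiv_zero S.hopen S.hh hz]
            ring
    · have hzK : z ∉ K := fun hk => hz (hKΩ hk)
      have hts1 : z ∉ tsupport (Ω.indicator f1) := by
        intro hmem
        exact hzK (closure_minimal (indicator_support_subset (fun w hw hwK => by
          simp [hf1def, (hfar w hw hwK).1])) hK.isClosed hmem)
      have hts2 : z ∉ tsupport (Ω.indicator f2) := by
        intro hmem
        exact hzK (closure_minimal (indicator_support_subset (fun w hw hwK => by
          simp [hf2def, (hfar w hw hwK).1])) hK.isClosed hmem)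
      rw [fderiv_eq_zero_outside hts1, fderiv_eq_zero_outside hts2,
        Set.indicator_of_notMem hz]
      simp
  have hzero := integral_div_comps_zero (Ω.indicator f1) (Ω.indicator f2) hs1 hs2 hc1 hc2
  rw [integral_congr_ae (Filter.Eventually.of_forall hdiv)] at hzero
  rwa [indicator_integral S.hopen] at hzero

end Identities

section IdentityB

open MeasureTheory

variable {Ω : Set ℂ} {h : ℂ → ℝ}

/-- Identity B : `∫_Ω ψ(h) ΔQ = ∫_Ω Q χ(h)|∇h|²`. -/
lemma identityB (S : IdSetup Ω h) (z₀ : ℂ) (ε : ℝ) (hε : 0 < ε) (t d : ℝ) (hd : 6 ≤ d) :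
    ∫ z in Ω, psi t d (h z) * Pf z₀ ε z
      = ∫ z in Ω, Qf z₀ ε z *
        (chi t d (h z) * ((fderiv ℝ h z 1)^2 + (fderiv ℝ h z Complex.I)^2)) := by
  classical
  set H1 : ℂ → ℝ := fun u => fderiv ℝ h u 1 with hH1def
  set H2 : ℂ → ℝ := fun u => fderiv ℝ h u Complex.I with hH2def
  set K : Set ℂ := {z : ℂ | z ∈ Ω ∧ h z ∈ Set.Icc (t - d - 3) (t + d + 3)} with hKdef
  have hK : IsCompact K := S.hKcpt _ _
  have hKΩ : K ⊆ Ω := fun z hz => hz.1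
  set g1 : ℂ → ℝ := fun z => psi t d (h z) * Qx z₀ ε z
      - Qf z₀ ε z * (A1 t d (h z) * H1 z) with hg1def
  set g2 : ℂ → ℝ := fun z => psi t d (h z) * Qy z₀ ε z
      - Qf z₀ ε z * (A1 t d (h z) * H2 z) with hg2def
  have hfar : ∀ z ∈ Ω, z ∉ K →
      (A1 t d (h z) = 0 ∧ chi t d (h z) = 0 ∧ psi t d (h z) = 0) := by
    intro z hz hzK
    have : h z ∉ Set.Icc (t - d - 3) (t + d + 3) := fun hmem => hzK ⟨hz, hmem⟩
    have hfar' := far_of_not_mem this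
    exact ⟨A1_zero_of_far t d (by linarith) hfar', chi_zero_of_far t d hd hfar',
      psi_zero_of_far t d (by linarith) hfar'⟩
  have hg1far : ∀ z ∈ Ω, z ∉ K → g1 z = 0 := by
    intro z hz hzK
    rw [hg1def]; simp [(hfar z hz hzK).1, (hfar z hz hzK).2.2]
  have hg2far : ∀ z ∈ Ω, z ∉ K → g2 z = 0 := by
    intro z hz hzK
    rw [hg2def]; simp [(hfar z hz hzK).1, (hfar z hz hzK).2.2]
  -- smoothness
  have hsmooth : ∀ (g : ℂ → ℝ) (q qq : ℂ → ℝ), ContDiff ℝ 1 q → ContDiff ℝ 1 qq →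
      (∀ w ∈ Ω, ContDiffAt ℝ 1 g w) →
      (∀ z ∈ Ω, z ∉ K → (fun z => psi t d (h z) * q z - qq z * (A1 t d (h z) * g z)) z = 0) →
      ContDiff ℝ 1 (Ω.indicator (fun z => psi t d (h z) * q z - qq z * (A1 t d (h z) * g z))) := by
    intro g q qq hq hqq hg hzero
    rw [contDiff_iff_contDiffAt]
    intro z
    by_cases hz : z ∈ Ω
    · have hev : Ω.indicator (fun z => psi t d (h z) * q z - qq z * (A1 t d (h z) * g z))
          =ᶠ[nhds z] (fun z => psi t d (h z) * q z - qq z * (A1 t d (h z) * g z)) := by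
        filter_upwards [S.hopen.mem_nhds hz] with w hw
        simp [Set.indicator_of_mem hw]
      have hform : ContDiffAt ℝ 1 (fun z => psi t d (h z) * q z - qq z * (A1 t d (h z) * g z)) z := by
        have hh2 : ContDiffAt ℝ 1 h z := (S.hCA z hz).of_le (by norm_num)
        exact ((((psi_contDiff t d).contDiffAt).comp z hh2).mul hq.contDiffAt).sub
          (hqq.contDiffAt.mul ((((A1_contDiff t d).contDiffAt).comp z hh2).mul (hg z hz)))
      exact hform.congr_of_eventuallyEq hev
    · have hzK : z ∉ K := fun hk => hz (hKΩ hk)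
      have hev : Ω.indicator (fun z => psi t d (h z) * q z - qq z * (A1 t d (h z) * g z))
          =ᶠ[nhds z] (fun _ => 0) := by
        filter_upwards [hK.isClosed.isOpen_compl.mem_nhds hzK] with w hw
        by_cases hwΩ : w ∈ Ω
        · simp only [Set.indicator_of_mem hwΩ]
          exact hzero w hwΩ hw
        · simp [Set.indicator_of_notMem hwΩ]
      exact contDiffAt_const.congr_of_eventuallyEq hev
  have hs1 : ContDiff ℝ 1 (Ω.indicator g1) :=
    hsmooth H1 (Qx z₀ ε) (Qf z₀ ε) (Qx_cd z₀ ε hε) (Qf_cd z₀ ε hε) S.hH1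
      (fun z hz hzK => by simp [(hfar z hz hzK).1, (hfar z hz hzK).2.2])
  have hs2 : ContDiff ℝ 1 (Ω.indicator g2) :=
    hsmooth H2 (Qy z₀ ε) (Qf z₀ ε) (Qy_cd z₀ ε hε) (Qf_cd z₀ ε hε) S.hH2
      (fun z hz hzK => by simp [(hfar z hz hzK).1, (hfar z hz hzK).2.2])
  have hc1 : HasCompactSupport (Ω.indicator g1) := indicator_hasCompactSupport hK hg1far
  have hc2 : HasCompactSupport (Ω.indicator g2) := indicator_hasCompactSupport hK hg2far
  -- pointwise divergence
  have hdiv : ∀ z : ℂ, fderiv ℝ (Ω.indicator g1) z 1 + fderiv ℝ (Ω.indicator g2) z Complex.I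
      = Ω.indicator (fun z => psi t d (h z) * Pf z₀ ε z
          - Qf z₀ ε z * (chi t d (h z) * (H1 z ^ 2 + H2 z ^ 2))) z := by
    intro z
    by_cases hz : z ∈ Ω
    · have hev1 : Ω.indicator g1 =ᶠ[nhds z] g1 := by
        filter_upwards [S.hopen.mem_nhds hz] with w hw
        simp [Set.indicator_of_mem hw]
      have hev2 : Ω.indicator g2 =ᶠ[nhds z] g2 := by
        filter_upwards [S.hopen.mem_nhds hz] with w hw
        simp [Set.indicator_of_mem hw]
      rw [hev1.fderiv_eq, hev2.fderiv_eq, Set.indicator_of_mem hz]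
      -- derivatives of pieces
      have hDh : HasFDerivAt h (fderiv ℝ h z) z := (S.hdiffh z hz).hasFDerivAt
      have hpsih : HasFDerivAt (fun w => psi t d (h w)) (A1 t d (h z) • fderiv ℝ h z) z :=
        (psi_hasDeriv t d (h z)).comp_hasFDerivAt z hDh
      have hA1h : HasFDerivAt (fun w => A1 t d (h w)) (chi t d (h z) • fderiv ℝ h z) z :=
        (A1_hasDeriv t d (h z)).comp_hasFDerivAt z hDh
      have hH1' : HasFDerivAt H1 (fderiv ℝ H1 z) z :=
        ((S.hH1 z hz).differentiableAt one_ne_zero).hasFDerivAt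
      have hH2' : HasFDerivAt H2 (fderiv ℝ H2 z) z :=
        ((S.hH2 z hz).differentiableAt one_ne_zero).hasFDerivAt
      have hQx' : HasFDerivAt (Qx z₀ ε) (fderiv ℝ (Qx z₀ ε) z) z :=
        (((Qx_cd z₀ ε hε).differentiable one_ne_zero) z).hasFDerivAt
      have hQy' : HasFDerivAt (Qy z₀ ε) (fderiv ℝ (Qy z₀ ε) z) z :=
        (((Qy_cd z₀ ε hε).differentiable one_ne_zero) z).hasFDerivAt
      have hQf' : HasFDerivAt (Qf z₀ ε) (fderiv ℝ (Qf z₀ ε) z) z :=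
        (((Qf_cd z₀ ε hε).differentiable one_ne_zero) z).hasFDerivAt
      have hinner1 : HasFDerivAt (fun w => A1 t d (h w) * H1 w)
          (A1 t d (h z) • fderiv ℝ H1 z + H1 z • (chi t d (h z) • fderiv ℝ h z)) z :=
        hA1h.mul hH1'
      have hinner2 : HasFDerivAt (fun w => A1 t d (h w) * H2 w)
          (A1 t d (h z) • fderiv ℝ H2 z + H2 z • (chi t d (h z) • fderiv ℝ h z)) z :=
        hA1h.mul hH2'
      have hterm1 : HasFDerivAt g1
          ((psi t d (h z) • fderiv ℝ (Qx z₀ ε) z + Qx z₀ ε z • (A1 t d (h z) • fderiv ℝ h z))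
            - (Qf z₀ ε z • (A1 t d (h z) • fderiv ℝ H1 z + H1 z • (chi t d (h z) • fderiv ℝ h z))
              + (A1 t d (h z) * H1 z) • fderiv ℝ (Qf z₀ ε) z)) z := by
        rw [hg1def]
        exact (hpsih.mul hQx').sub (hQf'.mul hinner1)
      have hterm2 : HasFDerivAt g2
          ((psi t d (h z) • fderiv ℝ (Qy z₀ ε) z + Qy z₀ ε z • (A1 t d (h z) • fderiv ℝ h z))
            - (Qf z₀ ε z • (A1 t d (h z) • fderiv ℝ H2 z + H2 z • (chi t d (h z) • fderiv ℝ h z))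
              + (A1 t d (h z) * H2 z) • fderiv ℝ (Qf z₀ ε) z)) z := by
        rw [hg2def]
        exact (hpsih.mul hQy').sub (hQf'.mul hinner2)
      rw [hterm1.fderiv, hterm2.fderiv]
      have hlap := laplace_fderiv_zero S.hopen S.hh hz
      have hQlap := Q_laplacian z₀ ε hε z
      have hQf1 := Qf_dir_one z₀ ε hε z
      have hQfI := Qf_dir_I z₀ ε hε z
      simp only [ContinuousLinearMap.add_apply, ContinuousLinearMap.sub_apply,
        ContinuousLinearMap.smul_apply, smul_eq_mul, hQf1, hQfI]
      have e1 : fderiv ℝ h z 1 = H1 z := rfl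
      have e2 : fderiv ℝ h z Complex.I = H2 z := rfl
      rw [e1, e2]
      have hlap' : fderiv ℝ H1 z 1 + fderiv ℝ H2 z Complex.I = 0 := hlap
      have hQlap' : fderiv ℝ (Qx z₀ ε) z 1 + fderiv ℝ (Qy z₀ ε) z Complex.I = Pf z₀ ε z := hQlap
      linear_combination (psi t d (h z)) * hQlap' - (Qf z₀ ε z * A1 t d (h z)) * hlap'
    · have hzK : z ∉ K := fun hk => hz (hKΩ hk)
      have hts1 : z ∉ tsupport (Ω.indicator g1) := by
        intro hmem
        exact hzK (closure_minimal (indicator_support_subset hg1far) hK.isClosed hmem)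
      have hts2 : z ∉ tsupport (Ω.indicator g2) := by
        intro hmem
        exact hzK (closure_minimal (indicator_support_subset hg2far) hK.isClosed hmem)
      rw [fderiv_eq_zero_outside hts1, fderiv_eq_zero_outside hts2,
        Set.indicator_of_notMem hz]
      simp
  have hzero := integral_div_comps_zero (Ω.indicator g1) (Ω.indicator g2) hs1 hs2 hc1 hc2
  rw [integral_congr_ae (Filter.Eventually.of_forall hdiv)] at hzero
  rw [indicator_integral S.hopen] at hzero
  -- split the integral
  have hint1 : IntegrableOn (fun z => psi t d (h z) * Pf z₀ ε z) Ω := by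
    apply indicator_integrable S.hopen hK hKΩ
    · intro z hz
      exact (((psi_contDiff t d).continuous.continuousAt.comp
        ((S.hCA z hz).continuousAt)).mul (Pf_cont z₀ ε hε).continuousAt)
    · intro z hz hzK
      simp [(hfar z hz hzK).2.2]
  have hint2 : IntegrableOn
      (fun z => Qf z₀ ε z * (chi t d (h z) * (H1 z ^ 2 + H2 z ^ 2))) Ω := by
    apply indicator_integrable S.hopen hK hKΩ
    · intro z hz
      have hWc : ContinuousAt (fun z => H1 z ^ 2 + H2 z ^ 2) z :=
        (((S.hH1 z hz).continuousAt.pow 2).add ((S.hH2 z hz).continuousAt.pow 2))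
      exact ((Qf_cd z₀ ε hε).continuous.continuousAt).mul
        ((((chi_cont t d).continuousAt).comp ((S.hCA z hz).continuousAt)).mul hWc)
    · intro z hz hzK
      simp [(hfar z hz hzK).2.1]
  have := MeasureTheory.integral_sub hint1 hint2
  rw [this] at hzero
  linarith [hzero]

end IdentityB


/-- On a nonempty bounded open connected set `Ω ⊆ ℂ`, the absolute value of a harmonic
function is never a proper map to `ℝ`: some compact set of `ℝ` has non-compact preimage. -/
theorem abs_harmonic_not_proper (Ω : Set ℂ) (hne : Ω.Nonempty) (hbd : Bornology.IsBounded Ω)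
    (hopen : IsOpen Ω) (hconn : IsConnected Ω) (h : ℂ → ℝ) (hh : HarmOn h Ω) :
    ∃ C : Set ℝ, IsCompact C ∧ ¬ IsCompact ((fun p : Ω => |h p|) ⁻¹' C) := by
  classical
  by_contra hcon
  push_neg at hcon
  -- properness transferred to ℂ
  have hKcpt : ∀ a b : ℝ, IsCompact {z : ℂ | z ∈ Ω ∧ h z ∈ Set.Icc a b} := by
    intro a b
    have hT1 : IsCompact ((fun p : Ω => |h p|) ⁻¹' (Set.Icc 0 (max |a| |b|))) :=
      hcon _ isCompact_Icc
    have hrest : Continuous (fun p : Ω => h p) := hh.1.continuousOn.restrict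
    set E' : Set Ω := (fun p : Ω => h p) ⁻¹' (Set.Icc a b) with hE'def
    have hE'closed : IsClosed E' := isClosed_Icc.preimage hrest
    have hsub : E' ⊆ (fun p : Ω => |h p|) ⁻¹' (Set.Icc 0 (max |a| |b|)) := by
      intro p hp
      rcases hp with ⟨hpa, hpb⟩
      constructor
      · exact abs_nonneg _
      · rw [abs_le]
        constructor
        · have := neg_abs_le (h p)
          have h2 : -(max |a| |b|) ≤ -|a| := neg_le_neg (le_max_left _ _)
          have h3 : -|a| ≤ a := neg_abs_le a
          linarith
        · have h2 : b ≤ |b| := le_abs_self b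
          have h3 : |b| ≤ max |a| |b| := le_max_right _ _
          linarith
    have hE'cpt : IsCompact E' := hT1.of_isClosed_subset hE'closed hsub
    have himg : {z : ℂ | z ∈ Ω ∧ h z ∈ Set.Icc a b} = Subtype.val '' E' := by
      ext z
      constructor
      · rintro ⟨hz, hmem⟩
        exact ⟨⟨z, hz⟩, hmem, rfl⟩
      · rintro ⟨p, hp, rfl⟩
        exact ⟨p.2, hp⟩
    rw [himg]
    exact hE'cpt.image continuous_subtype_val
  set S : IdSetup Ω h := ⟨hopen, hh, hKcpt⟩ with hSdef
  obtain ⟨z₀, hz₀⟩ := hne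
  set t : ℝ := h z₀ with htdef
  -- choose radius ε
  obtain ⟨r₁, hr₁pos, hr₁⟩ := Metric.isOpen_iff.1 hopen z₀ hz₀
  have hCAz : ContinuousAt h z₀ := hh.1.continuousOn.continuousAt (hopen.mem_nhds hz₀)
  obtain ⟨δ, hδpos, hδ⟩ := Metric.continuousAt_iff.1 hCAz 1 one_pos
  set ε : ℝ := min (r₁ / 2) (δ / 2) with hεdef
  have hεpos : 0 < ε := lt_min (by linarith) (by linarith)
  have hball : Metric.closedBall z₀ ε ⊆ Ω := by
    intro z hz
    apply hr₁
    have : dist z z₀ ≤ ε := Metric.mem_closedBall.1 hz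
    have : ε ≤ r₁ / 2 := min_le_left _ _
    exact Metric.mem_ball.2 (by linarith [Metric.mem_closedBall.1 hz])
  have hball1 : ∀ z ∈ Metric.closedBall z₀ ε, |h z - t| ≤ 1 := by
    intro z hz
    have h1 : dist z z₀ ≤ ε := Metric.mem_closedBall.1 hz
    have h2 : ε ≤ δ / 2 := min_le_right _ _
    have := hδ (show dist z z₀ < δ by linarith)
    rw [Real.dist_eq] at this
    exact le_of_lt this
  -- global bounds
  obtain ⟨R, hR⟩ := hbd.subset_closedBall 0
  set B : ℝ := (R + ‖z₀‖) ^ 2 + ε ^ 2 with hBdef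
  have hRnn : 0 ≤ R + ‖z₀‖ := by
    have h1 : 0 ≤ ‖z₀‖ := norm_nonneg _
    have h2 : ‖z₀‖ ≤ R := by simpa [Complex.dist_eq] using hR hz₀
    linarith
  have hBpos : 0 < B := by
    have := pow_pos hεpos 2
    have := sq_nonneg (R + ‖z₀‖)
    rw [hBdef]; linarith
  have hNle : ∀ z ∈ Ω, Nf z₀ ε z ≤ B := by
    intro z hz
    have h1 : ‖z‖ ≤ R := by simpa [Complex.dist_eq] using hR hz
    have h2 : ‖z - z₀‖ ≤ R + ‖z₀‖ := by
      calc ‖z - z₀‖ ≤ ‖z‖ + ‖z₀‖ := norm_sub_le _ _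
        _ ≤ R + ‖z₀‖ := by linarith
    have h3 : (z - z₀).re ^ 2 + (z - z₀).im ^ 2 = ‖z - z₀‖ ^ 2 := by
      rw [Complex.sq_norm, Complex.normSq_apply]
      ring
    have h4 : ‖z - z₀‖ ^ 2 ≤ (R + ‖z₀‖) ^ 2 :=
      pow_le_pow_left₀ (norm_nonneg _) h2 2
    unfold Nf
    rw [hBdef]
    linarith [h3, h4]
  have hNge : ∀ z : ℂ, ε ^ 2 ≤ Nf z₀ ε z := by
    intro z
    have := sq_nonneg (z - z₀).re
    have := sq_nonneg (z - z₀).im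
    unfold Nf; linarith
  set MQ : ℝ := (|Real.log (ε ^ 2)| + |Real.log B|) / 2 with hMQdef
  have hMQnn : 0 ≤ MQ := by
    have := abs_nonneg (Real.log (ε ^ 2))
    have := abs_nonneg (Real.log B)
    rw [hMQdef]; linarith
  have hQbound : ∀ z ∈ Ω, |Qf z₀ ε z| ≤ MQ := by
    intro z hz
    have hNpos := Nf_pos z₀ ε hεpos z
    have hl1 : Real.log (ε ^ 2) ≤ Real.log (Nf z₀ ε z) :=
      Real.log_le_log (by positivity) (hNge z)
    have hl2 : Real.log (Nf z₀ ε z) ≤ Real.log B :=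
      Real.log_le_log hNpos (hNle z hz)
    unfold Qf
    rw [abs_div]
    rw [show |(2:ℝ)| = 2 by norm_num]
    rw [hMQdef]
    have h1 : Real.log (Nf z₀ ε z) ≤ |Real.log B| := le_trans hl2 (le_abs_self _)
    have h2 : -|Real.log (ε ^ 2)| ≤ Real.log (Nf z₀ ε z) :=
      le_trans (neg_abs_le _) hl1
    have h3 : |Real.log (Nf z₀ ε z)| ≤ |Real.log (ε ^ 2)| + |Real.log B| := by
      rw [abs_le]
      constructor
      · have := abs_nonneg (Real.log B); linarith
      · have := abs_nonneg (Real.log (ε ^ 2)); linarith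
    linarith
  -- the energy function J
  set W : ℂ → ℝ := fun z => (fderiv ℝ h z 1) ^ 2 + (fderiv ℝ h z Complex.I) ^ 2 with hWdef
  have hWnn : ∀ z, 0 ≤ W z := fun z => by rw [hWdef]; positivity
  have hWcont : ∀ z ∈ Ω, ContinuousAt W z := by
    intro z hz
    rw [hWdef]
    exact ((S.hH1 z hz).continuousAt.pow 2).add ((S.hH2 z hz).continuousAt.pow 2)
  set J : ℝ → ℝ := fun s => ∫ z in Ω, bφ (h z - s) * W z with hJdef
  have hbφh_cont : ∀ (s : ℝ), ∀ z ∈ Ω, ContinuousAt (fun z => bφ (h z - s) * W z) z := by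
    intro s z hz
    exact ((bφ_cont.continuousAt).comp (((S.hCA z hz).continuousAt).sub continuousAt_const)).mul
      (hWcont z hz)
  have hbφh_far : ∀ (s : ℝ), ∀ z ∈ Ω,
      z ∉ {w : ℂ | w ∈ Ω ∧ h w ∈ Set.Icc (s - 2) (s + 2)} → bφ (h z - s) * W z = 0 := by
    intro s z hz hzK
    have : h z ∉ Set.Icc (s - 2) (s + 2) := fun hmem => hzK ⟨hz, hmem⟩
    simp only [Set.mem_Icc, not_and_or, not_le] at this
    have hb : bφ (h z - s) = 0 := by
      rcases this with hlt | hlt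
      · exact bφ_zero (by rw [_root_.abs_of_nonpos (by linarith)]; linarith)
      · exact bφ_zero (by rw [_root_.abs_of_nonneg (by linarith)]; linarith)
    rw [hb, zero_mul]
  have hJint : ∀ s : ℝ, MeasureTheory.IntegrableOn (fun z => bφ (h z - s) * W z) Ω := by
    intro s
    exact indicator_integrable hopen (hKcpt (s - 2) (s + 2)) (fun z hz => hz.1)
      (hbφh_cont s) (hbφh_far s)
  have hJnn : ∀ s : ℝ, 0 ≤ J s := by
    intro s
    rw [hJdef]
    apply MeasureTheory.setIntegral_nonneg hopen.measurableSet
    intro z _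
    exact mul_nonneg (bφ_nonneg _) (hWnn z)
  -- main inequality, for every d ≥ 6
  have main : ∀ d : ℝ, 6 ≤ d →
      (d - 4) * Itot * (2 * ε ^ 2 / B ^ 2) * (MeasureTheory.volume (Metric.closedBall z₀ ε)).toReal
        ≤ 4 * MQ * J t := by
    intro d hd
    have hIA := identityA S t d hd
    have hIB := identityB S z₀ ε hεpos t d hd
    -- rewrite chi * W as a combination
    have hchiW : ∀ z : ℂ, chi t d (h z) * W z
        = bφ (h z - (t - d)) * W z - 2 * (bφ (h z - t) * W z) + bφ (h z - (t + d)) * W z := by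
      intro z
      unfold chi
      have e1 : h z + d - t = h z - (t - d) := by ring
      have e3 : h z - t - d = h z - (t + d) := by ring
      rw [e1, e3]; ring
    have hintsub : MeasureTheory.IntegrableOn
        (fun z => bφ (h z - (t - d)) * W z - 2 * (bφ (h z - t) * W z)) Ω :=
      (hJint (t - d)).sub ((hJint t).const_mul 2)
    have hsplit : ∫ z in Ω, chi t d (h z) * W z = J (t - d) - 2 * J t + J (t + d) := by
      rw [MeasureTheory.setIntegral_congr_fun hopen.measurableSet
        (fun z _ => hchiW z)]
      rw [MeasureTheory.integral_add hintsub (hJint (t + d))]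
      rw [MeasureTheory.integral_sub (hJint (t - d)) ((hJint t).const_mul 2)]
      all_goals rw [MeasureTheory.integral_const_mul]
      all_goals rw [hJdef]
    have hchiW0 : ∫ z in Ω, chi t d (h z) * W z = 0 := by
      rw [← hIA]
    have hJbal : J (t - d) + J (t + d) = 2 * J t := by
      rw [hchiW0] at hsplit
      linarith
    have hJub1 : J (t - d) ≤ 2 * J t := by linarith [hJnn (t + d)]
    have hJub2 : J (t + d) ≤ 2 * J t := by linarith [hJnn (t - d)]
    -- upper bound for RHS of identity B
    have hintQ : MeasureTheory.IntegrableOn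
        (fun z => Qf z₀ ε z * (chi t d (h z) * W z)) Ω := by
      apply indicator_integrable hopen (hKcpt (t - d - 3) (t + d + 3)) (fun z hz => hz.1)
      · intro z hz
        exact ((Qf_cd z₀ ε hεpos).continuous.continuousAt).mul
          ((((chi_cont t d).continuousAt).comp (((S.hCA z hz).continuousAt))).mul (hWcont z hz))
      · intro z hz hzK
        have : h z ∉ Set.Icc (t - d - 3) (t + d + 3) := fun hmem => hzK ⟨hz, hmem⟩
        rw [chi_zero_of_far t d hd (far_of_not_mem this)]
        ring
    have hintMaj : MeasureTheory.IntegrableOn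
        (fun z => MQ * (bφ (h z - (t - d)) * W z + 2 * (bφ (h z - t) * W z)
          + bφ (h z - (t + d)) * W z)) Ω := by
      apply MeasureTheory.Integrable.const_mul
      exact ((hJint (t - d)).add ((hJint t).const_mul 2)).add (hJint (t + d))
    have hptw : ∀ z ∈ Ω, |Qf z₀ ε z * (chi t d (h z) * W z)|
        ≤ MQ * (bφ (h z - (t - d)) * W z + 2 * (bφ (h z - t) * W z)
          + bφ (h z - (t + d)) * W z) := by
      intro z hz
      have hW := hWnn z
      have h1 := hQbound z hz
      have h2 := chi_abs_le t d (h z)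
      have e1 : h z + d - t = h z - (t - d) := by ring
      have e3 : h z - t - d = h z - (t + d) := by ring
      rw [e1, e3] at h2
      rw [abs_mul, abs_mul, _root_.abs_of_nonneg hW]
      have hb1 := bφ_nonneg (h z - (t - d))
      have hb2 := bφ_nonneg (h z - t)
      have hb3 := bφ_nonneg (h z - (t + d))
      have step1 : |chi t d (h z)| * W z
          ≤ (bφ (h z - (t - d)) + 2 * bφ (h z - t) + bφ (h z - (t + d))) * W z :=
        mul_le_mul_of_nonneg_right h2 hW
      have step2 : |Qf z₀ ε z| * (|chi t d (h z)| * W z)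
          ≤ MQ * ((bφ (h z - (t - d)) + 2 * bφ (h z - t) + bφ (h z - (t + d))) * W z) := by
        apply mul_le_mul h1 step1 (mul_nonneg (abs_nonneg _) hW) hMQnn
      calc |Qf z₀ ε z| * (|chi t d (h z)| * W z)
          ≤ MQ * ((bφ (h z - (t - d)) + 2 * bφ (h z - t) + bφ (h z - (t + d))) * W z) := step2
        _ = MQ * (bφ (h z - (t - d)) * W z + 2 * (bφ (h z - t) * W z)
            + bφ (h z - (t + d)) * W z) := by ring
    have hub : ∫ z in Ω, Qf z₀ ε z * (chi t d (h z) * W z) ≤ 4 * MQ * J t := by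
      have habs : ∫ z in Ω, Qf z₀ ε z * (chi t d (h z) * W z)
          ≤ ∫ z in Ω, |Qf z₀ ε z * (chi t d (h z) * W z)| := by
        apply MeasureTheory.integral_mono hintQ hintQ.abs
        intro z
        exact le_abs_self _
      have hmono : ∫ z in Ω, |Qf z₀ ε z * (chi t d (h z) * W z)|
          ≤ ∫ z in Ω, MQ * (bφ (h z - (t - d)) * W z + 2 * (bφ (h z - t) * W z)
            + bφ (h z - (t + d)) * W z) := by
        apply MeasureTheory.setIntegral_mono_on hintQ.abs hintMaj hopen.measurableSet
        exact hptw
      have hintchiW : MeasureTheory.IntegrableOn (fun z => chi t d (h z) * W z) Ω := by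
        apply MeasureTheory.IntegrableOn.congr_fun (hintsub.add (hJint (t + d)))
          _ hopen.measurableSet
        intro z _
        exact (hchiW z).symm
      have hIc : ∫ z in Ω, (chi t d (h z) * W z + 4 * (bφ (h z - t) * W z))
          = (∫ z in Ω, chi t d (h z) * W z) + ∫ z in Ω, 4 * (bφ (h z - t) * W z) :=
        MeasureTheory.integral_add hintchiW ((hJint t).const_mul 4)
      have hI4 : ∫ z in Ω, 4 * (bφ (h z - t) * W z) = 4 * J t :=
        MeasureTheory.integral_const_mul 4 _
      have hmaj_eq : ∀ z : ℂ, MQ * (bφ (h z - (t - d)) * W z + 2 * (bφ (h z - t) * W z)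
            + bφ (h z - (t + d)) * W z)
          = MQ * (chi t d (h z) * W z + 4 * (bφ (h z - t) * W z)) := by
        intro z
        rw [hchiW z]
        ring
      have hcomp : ∫ z in Ω, MQ * (bφ (h z - (t - d)) * W z + 2 * (bφ (h z - t) * W z)
            + bφ (h z - (t + d)) * W z) = MQ * (4 * J t) := by
        rw [MeasureTheory.setIntegral_congr_fun hopen.measurableSet
          (fun z _ => hmaj_eq z)]
        rw [MeasureTheory.integral_const_mul, hIc, hchiW0, hI4]
        ring
      have hfin : MQ * (4 * J t) = 4 * MQ * J t := by ring
      linarith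
    -- lower bound for LHS of identity B
    have hintP : MeasureTheory.IntegrableOn (fun z => psi t d (h z) * Pf z₀ ε z) Ω := by
      apply indicator_integrable hopen (hKcpt (t - d - 3) (t + d + 3)) (fun z hz => hz.1)
      · intro z hz
        exact (((psi_contDiff t d).continuous.continuousAt).comp
          ((S.hCA z hz).continuousAt)).mul (Pf_cont z₀ ε hεpos).continuousAt
      · intro z hz hzK
        have : h z ∉ Set.Icc (t - d - 3) (t + d + 3) := fun hmem => hzK ⟨hz, hmem⟩
        rw [psi_zero_of_far t d (by linarith) (far_of_not_mem this)]
        ring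
    have hnnPsiP : ∀ z : ℂ, 0 ≤ psi t d (h z) * Pf z₀ ε z := fun z =>
      mul_nonneg (psi_nonneg t d (by linarith) _) (Pf_pos z₀ ε hεpos z).le
    have hlb1 : ∫ z in Metric.closedBall z₀ ε, psi t d (h z) * Pf z₀ ε z
        ≤ ∫ z in Ω, psi t d (h z) * Pf z₀ ε z := by
      apply MeasureTheory.setIntegral_mono_set hintP
      · exact Filter.Eventually.of_forall (fun z => hnnPsiP z)
      · exact (HasSubset.Subset.eventuallyLE hball)
    have hpmin : ∀ z ∈ Metric.closedBall z₀ ε,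
        (d - 4) * Itot * (2 * ε ^ 2 / B ^ 2) ≤ psi t d (h z) * Pf z₀ ε z := by
      intro z hz
      have hzΩ : z ∈ Ω := hball hz
      have hψ : (d - 4) * Itot ≤ psi t d (h z) := psi_big t d hd (hball1 z hz)
      have hPf : 2 * ε ^ 2 / B ^ 2 ≤ Pf z₀ ε z := by
        unfold Pf
        apply div_le_div_of_nonneg_left (by positivity) (pow_pos (Nf_pos z₀ ε hεpos z) 2)
        exact pow_le_pow_left₀ (Nf_pos z₀ ε hεpos z).le (hNle z hzΩ) 2
      have hL : 0 ≤ (d - 4) * Itot := mul_nonneg (by linarith) Itot_pos.le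
      have hM : 0 ≤ 2 * ε ^ 2 / B ^ 2 := by positivity
      exact mul_le_mul hψ hPf hM (le_trans hL hψ)
    have hlb2 : (d - 4) * Itot * (2 * ε ^ 2 / B ^ 2)
          * (MeasureTheory.volume (Metric.closedBall z₀ ε)).toReal
        ≤ ∫ z in Metric.closedBall z₀ ε, psi t d (h z) * Pf z₀ ε z := by
      have hconst : ∫ _ in Metric.closedBall z₀ ε,
          ((d - 4) * Itot * (2 * ε ^ 2 / B ^ 2)) ∂MeasureTheory.volume
          = (d - 4) * Itot * (2 * ε ^ 2 / B ^ 2)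
            * (MeasureTheory.volume (Metric.closedBall z₀ ε)).toReal := by
        rw [MeasureTheory.setIntegral_const, smul_eq_mul, MeasureTheory.measureReal_def]
        ring
      rw [← hconst]
      apply MeasureTheory.setIntegral_mono_on
      · exact MeasureTheory.integrableOn_const
          (MeasureTheory.measure_closedBall_lt_top).ne
      · exact hintP.mono_set hball
      · exact measurableSet_closedBall
      · exact hpmin
    calc (d - 4) * Itot * (2 * ε ^ 2 / B ^ 2)
          * (MeasureTheory.volume (Metric.closedBall z₀ ε)).toReal
        ≤ ∫ z in Metric.closedBall z₀ ε, psi t d (h z) * Pf z₀ ε z := hlb2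
      _ ≤ ∫ z in Ω, psi t d (h z) * Pf z₀ ε z := hlb1
      _ = ∫ z in Ω, Qf z₀ ε z * (chi t d (h z) * W z) := by
          rw [hIB]
      _ ≤ 4 * MQ * J t := hub
  -- conclude: contradiction by choosing d large
  set V : ℝ := (MeasureTheory.volume (Metric.closedBall z₀ ε)).toReal with hVdef
  have hVpos : 0 < V := by
    rw [hVdef]
    apply ENNReal.toReal_pos
    · exact (Metric.measure_closedBall_pos MeasureTheory.volume z₀ hεpos).ne'
    · exact MeasureTheory.measure_closedBall_lt_top.ne
  set c : ℝ := Itot * (2 * ε ^ 2 / B ^ 2) * V with hcdef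
  have hcpos : 0 < c := by
    rw [hcdef]
    have := Itot_pos
    positivity
  set D : ℝ := max 6 ((4 * MQ * J t) / c + 5) with hDdef
  have hD6 : 6 ≤ D := le_max_left _ _
  have hDbig : (4 * MQ * J t) / c + 5 ≤ D := le_max_right _ _
  have hmain := main D hD6
  have hre : (D - 4) * Itot * (2 * ε ^ 2 / B ^ 2) * V = (D - 4) * c := by
    rw [hcdef]; ring
  rw [hre] at hmain
  have hDm4 : (4 * MQ * J t) / c + 1 ≤ D - 4 := by linarith
  have : ((4 * MQ * J t) / c + 1) * c ≤ (D - 4) * c :=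
    mul_le_mul_of_nonneg_right hDm4 hcpos.le
  have hdiv : ((4 * MQ * J t) / c) * c = 4 * MQ * J t := div_mul_cancel₀ _ hcpos.ne'
  nlinarith [hmain, this, hdiv, hcpos]
end

section
/- Let T > 0. There do not exist harmonic functions x, y : 𝔻 → ℝ on the open unit disk such that the map 𝔻 → (ℝ/Tℤ) × ℝ sending p to (x(p) mod T, y(p)) is proper. Equivalently, there is no proper harmonic map from the unit disk into the complete flat cylinder of circumference T. -/
open Complex Metric
open Filter Set Topology

/-- Second derivative test: at a local minimum of a C² function, `f'' ≥ 0`. -/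
lemma sd_test (f : ℝ → ℝ) (hf : ContDiffAt ℝ 2 f 0) (hmin : IsLocalMin f 0) :
    0 ≤ deriv (deriv f) 0 := by
  by_contra h
  push_neg at h
  -- get an open neighborhood where f is C²
  obtain ⟨u, hu, hfu⟩ := hf.contDiffOn (le_refl 2) (by simp)
  obtain ⟨ε, hε, hball⟩ := Metric.mem_nhds_iff.mp hu
  have hV : ContDiffOn ℝ 2 f (Metric.ball (0:ℝ) ε) := hfu.mono hball
  have hVopen : IsOpen (Metric.ball (0:ℝ) ε) := Metric.isOpen_ball
  have h0V : (0:ℝ) ∈ Metric.ball (0:ℝ) ε := Metric.mem_ball_self hε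
  have hVnhds : Metric.ball (0:ℝ) ε ∈ 𝓝 (0:ℝ) := hVopen.mem_nhds h0V
  have hd1 : ContDiffOn ℝ 1 (deriv f) (Metric.ball (0:ℝ) ε) :=
    hV.deriv_of_isOpen hVopen (by norm_num)
  have hdiff : ∀ t ∈ Metric.ball (0:ℝ) ε, DifferentiableAt ℝ f t := fun t ht =>
    ((hV.differentiableOn (by norm_num)).differentiableAt (hVopen.mem_nhds ht))
  have hdd : DifferentiableAt ℝ (deriv f) 0 :=
    (hd1.differentiableOn one_ne_zero).differentiableAt hVnhds
  have hf'0 : deriv f 0 = 0 := hmin.deriv_eq_zero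
  have hslope := hasDerivAt_iff_tendsto_slope.mp hdd.hasDerivAt
  -- eventually the slope of deriv f is negative
  have hev : ∀ᶠ t in 𝓝[≠] (0:ℝ), slope (deriv f) 0 t < 0 :=
    hslope.eventually_lt_const h
  have hev' : ∀ᶠ t in 𝓝[>] (0:ℝ), slope (deriv f) 0 t < 0 :=
    hev.filter_mono (nhdsWithin_mono _ (fun t ht => ne_of_gt ht))
  have hneg : ∀ᶠ t in 𝓝[>] (0:ℝ), deriv f t < 0 := by
    filter_upwards [hev', self_mem_nhdsWithin] with t ht ht0
    have hts : slope (deriv f) 0 t = t⁻¹ * deriv f t := by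
      simp [slope, hf'0]
    rw [hts] at ht
    have htpos : (0:ℝ) < t := ht0
    have hinv : (0:ℝ) < t⁻¹ := inv_pos.mpr htpos
    nlinarith
  -- extract an interval (0, δ) where deriv f < 0
  obtain ⟨δ, hδ, hIoo⟩ := mem_nhdsGT_iff_exists_Ioo_subset.mp hneg
  set t₀ := min δ ε / 2 with ht₀def
  have hδ' : (0:ℝ) < δ := hδ
  have hminpos : (0:ℝ) < min δ ε := lt_min hδ' hε
  have ht₀pos : 0 < t₀ := by rw [ht₀def]; exact half_pos hminpos
  have ht₀δ : t₀ < δ := by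
    have : min δ ε ≤ δ := min_le_left _ _
    linarith [ht₀pos]
  have ht₀ε : t₀ < ε := by
    have : min δ ε ≤ ε := min_le_right _ _
    linarith [ht₀pos]
  have hIccV : Set.Icc (0:ℝ) t₀ ⊆ Metric.ball (0:ℝ) ε := by
    intro s hs
    simp only [Metric.mem_ball, Real.dist_eq, sub_zero]
    rw [_root_.abs_of_nonneg hs.1]
    linarith [hs.2]
  have hanti : StrictAntiOn f (Set.Icc (0:ℝ) t₀) := by
    apply strictAntiOn_of_deriv_neg (convex_Icc _ _)
    · exact (hV.continuousOn).mono hIccV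
    · intro s hs
      rw [interior_Icc] at hs
      exact hIoo ⟨hs.1, lt_trans hs.2 ht₀δ⟩
  -- but the local min says f 0 ≤ f s for small s > 0
  have hminev : ∀ᶠ s in 𝓝[>] (0:ℝ), f 0 ≤ f s :=
    (hmin.filter_mono nhdsWithin_le_nhds)
  have hsmall : ∀ᶠ s in 𝓝[>] (0:ℝ), s ∈ Set.Ioc (0:ℝ) t₀ :=
    Ioc_mem_nhdsGT_of_mem ⟨le_refl 0, ht₀pos⟩
  obtain ⟨s, hs1, hs2⟩ := (hminev.and hsmall).exists
  have : f s < f 0 := hanti ⟨le_refl 0, ht₀pos.le⟩ ⟨hs2.1.le, hs2.2⟩ hs2.1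
  linarith

/-- If `t ↦ g t - (1/4)((a+t)² + b²)` has a local min at `0` and `g` is C², then
`g'' 0 ≥ 1/2`. -/
lemma aux_lower (g : ℝ → ℝ) (hg : ContDiffAt ℝ 2 g 0) (a b : ℝ)
    (hmin : IsLocalMin (fun t => g t - (1/4) * ((a + t)^2 + b^2)) 0) :
    1/2 ≤ deriv (deriv g) 0 := by
  set q : ℝ → ℝ := fun t => (1/4) * ((a + t)^2 + b^2) with hq
  have hqd : ∀ t : ℝ, HasDerivAt q ((1/4) * (2*(a+t))) t := by
    intro t
    have h1 : HasDerivAt (fun s : ℝ => a + s) 1 t := (hasDerivAt_id t).const_add a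
    have h2 : HasDerivAt (fun s : ℝ => (a + s)^2) (2*(a+t)^1*1) t := h1.pow 2
    have h3 := (h2.add_const (b^2)).const_mul (1/4 : ℝ)
    exact h3.congr_deriv (by ring)
  have hqc : ContDiff ℝ 2 q :=
    contDiff_const.mul (((contDiff_const.add contDiff_id).pow 2).add contDiff_const)
  have hf : ContDiffAt ℝ 2 (fun t => g t - q t) 0 := hg.sub hqc.contDiffAt
  have h0 := sd_test _ hf hmin
  -- g is eventually differentiable near 0
  obtain ⟨u, hu, hgu⟩ := hg.contDiffOn (le_refl 2) (by simp)
  obtain ⟨ε, hε, hball⟩ := Metric.mem_nhds_iff.mp hu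
  have hV : ContDiffOn ℝ 2 g (Metric.ball (0:ℝ) ε) := hgu.mono hball
  have hVopen : IsOpen (Metric.ball (0:ℝ) ε) := Metric.isOpen_ball
  have hVnhds : Metric.ball (0:ℝ) ε ∈ 𝓝 (0:ℝ) := hVopen.mem_nhds (Metric.mem_ball_self hε)
  have hdiff : ∀ t ∈ Metric.ball (0:ℝ) ε, DifferentiableAt ℝ g t := fun t ht =>
    (hV.differentiableOn (by norm_num)).differentiableAt (hVopen.mem_nhds ht)
  have hdd : DifferentiableAt ℝ (deriv g) 0 :=
    ((hV.deriv_of_isOpen (m := 1) hVopen (by norm_num)).differentiableOn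
      one_ne_zero).differentiableAt hVnhds
  -- deriv (g - q) = deriv g - deriv q near 0
  have hev : deriv (fun t => g t - q t) =ᶠ[𝓝 0] fun t => deriv g t - (1/4)*(2*(a+t)) := by
    filter_upwards [hVnhds] with t ht
    rw [deriv_fun_sub (hdiff t ht) (hqd t).differentiableAt, (hqd t).deriv]
  have hkey : deriv (deriv (fun t => g t - q t)) 0 = deriv (deriv g) 0 - 1/2 := by
    rw [hev.deriv_eq]
    have hlin : HasDerivAt (fun t : ℝ => (1/4) * (2*(a+t))) (1/2) 0 := by
      have h1 : HasDerivAt (fun s : ℝ => a + s) 1 0 := (hasDerivAt_id 0).const_add a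
      have h2 := (h1.const_mul (2:ℝ)).const_mul (1/4:ℝ)
      exact h2.congr_deriv (by ring)
    exact (hdd.hasDerivAt.sub hlin).deriv
  rw [hkey] at h0
  linarith

/-- A harmonic function on the unit disk nearly attains its value at `0` somewhere on
any sphere of radius `r' < 1`. -/
lemma key (y : ℂ → ℝ) (hy : HarmOn y (Metric.ball 0 1)) (r' : ℝ) (h0 : 0 ≤ r')
    (h1 : r' < 1) : ∃ z ∈ Metric.sphere (0:ℂ) r', y z ≤ y 0 + 1 := by
  set w : ℂ → ℝ := fun z => y z - (1/4) * (z.re^2 + z.im^2) with hw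
  have hsub : Metric.closedBall (0:ℂ) r' ⊆ Metric.ball (0:ℂ) 1 := closedBall_subset_ball h1
  have hwcont : ContinuousOn w (Metric.closedBall (0:ℂ) r') := by
    apply ContinuousOn.sub (hy.1.continuousOn.mono hsub)
    exact (continuous_const.mul
      ((Complex.continuous_re.pow 2).add (Complex.continuous_im.pow 2))).continuousOn
  obtain ⟨z₀, hz₀mem, hz₀min⟩ := (isCompact_closedBall (0:ℂ) r').exists_isMinOn
    ⟨0, Metric.mem_closedBall_self h0⟩ hwcont
  have hz₀norm : ‖z₀‖ ≤ r' := mem_closedBall_zero_iff.mp hz₀mem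
  have h2d : ∀ f : ℝ → ℝ, iteratedDeriv 2 f = deriv (deriv f) := by
    intro f
    rw [show (2:ℕ) = 1+1 from rfl, iteratedDeriv_succ, iteratedDeriv_one]
  rcases eq_or_lt_of_le hz₀norm with heq | hlt
  · -- minimum on the sphere: use it
    refine ⟨z₀, by simpa [mem_sphere_zero_iff_norm] using heq, ?_⟩
    have hmin0 : w z₀ ≤ w 0 := hz₀min (Metric.mem_closedBall_self h0)
    have hnorm : z₀.re^2 + z₀.im^2 = r'^2 := by
      have : z₀.re^2 + z₀.im^2 = ‖z₀‖^2 := by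
        rw [Complex.sq_norm, Complex.normSq_apply]; ring
      rw [this, heq]
    have hr2 : r'^2 ≤ 1 := by nlinarith
    simp only [hw] at hmin0
    simp only [Complex.zero_re, Complex.zero_im] at hmin0
    nlinarith
  · -- interior minimum: contradiction with harmonicity
    exfalso
    have hz₀ball : z₀ ∈ Metric.ball (0:ℂ) 1 :=
      mem_ball_zero_iff.mpr (lt_trans hlt h1)
    have hcy : ContDiffAt ℝ 2 y z₀ := hy.1.contDiffAt (isOpen_ball.mem_nhds hz₀ball)
    set g₁ : ℝ → ℝ := fun t => y (z₀ + (t:ℂ)) with hg₁def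
    set g₂ : ℝ → ℝ := fun t => y (z₀ + (t:ℂ) * Complex.I) with hg₂def
    have hinner₁ : ContDiff ℝ 2 (fun t : ℝ => z₀ + (t:ℂ)) :=
      contDiff_const.add Complex.ofRealCLM.contDiff
    have hinner₂ : ContDiff ℝ 2 (fun t : ℝ => z₀ + (t:ℂ) * Complex.I) :=
      contDiff_const.add (Complex.ofRealCLM.contDiff.mul contDiff_const)
    have hg₁ : ContDiffAt ℝ 2 g₁ 0 := by
      have h' : ContDiffAt ℝ 2 y ((fun t : ℝ => z₀ + (t:ℂ)) 0) := by simpa using hcy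
      exact ContDiffAt.comp (g := y) (f := fun t : ℝ => z₀ + (t:ℂ)) 0 h' hinner₁.contDiffAt
    have hg₂ : ContDiffAt ℝ 2 g₂ 0 := by
      have h' : ContDiffAt ℝ 2 y ((fun t : ℝ => z₀ + (t:ℂ) * Complex.I) 0) := by
        simpa using hcy
      exact ContDiffAt.comp (g := y) (f := fun t : ℝ => z₀ + (t:ℂ) * Complex.I) 0 h' hinner₂.contDiffAt
    have hlocal : ∀ᶠ z in 𝓝 z₀, w z₀ ≤ w z := by
      filter_upwards [isOpen_ball.mem_nhds (mem_ball_zero_iff.mpr hlt)] with z hz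
      exact hz₀min (ball_subset_closedBall hz)
    -- direction 1
    have hre₁ : ∀ t : ℝ, g₁ t - (1/4) * ((z₀.re + t)^2 + z₀.im^2) = w (z₀ + (t:ℂ)) := by
      intro t; simp [hw, hg₁def]
    have htend₁ : Tendsto (fun t : ℝ => z₀ + (t:ℂ)) (𝓝 0) (𝓝 z₀) :=
      (continuous_const.add Complex.continuous_ofReal).tendsto' 0 z₀ (by simp)
    have hmin₁ : IsLocalMin (fun t : ℝ => g₁ t - (1/4) * ((z₀.re + t)^2 + z₀.im^2)) 0 := by
      have hev := htend₁.eventually hlocal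
      filter_upwards [hev] with t ht
      have h00 : g₁ 0 - (1/4) * ((z₀.re + 0)^2 + z₀.im^2) = w z₀ := by
        rw [hre₁ 0]; norm_num
      rw [h00, hre₁ t]; exact ht
    have h₁ := aux_lower g₁ hg₁ z₀.re z₀.im hmin₁
    -- direction 2
    have hre₂ : ∀ t : ℝ, g₂ t - (1/4) * ((z₀.im + t)^2 + z₀.re^2)
        = w (z₀ + (t:ℂ) * Complex.I) := by
      intro t
      simp only [hw, hg₂def, Complex.add_re, Complex.add_im, Complex.mul_re, Complex.mul_im,
        Complex.ofReal_re, Complex.ofReal_im, Complex.I_re, Complex.I_im]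
      ring
    have htend₂ : Tendsto (fun t : ℝ => z₀ + (t:ℂ) * Complex.I) (𝓝 0) (𝓝 z₀) :=
      (continuous_const.add
        (Complex.continuous_ofReal.mul continuous_const)).tendsto' 0 z₀ (by simp)
    have hmin₂ : IsLocalMin (fun t : ℝ => g₂ t - (1/4) * ((z₀.im + t)^2 + z₀.re^2)) 0 := by
      have hev := htend₂.eventually hlocal
      filter_upwards [hev] with t ht
      have h00 : g₂ 0 - (1/4) * ((z₀.im + 0)^2 + z₀.re^2) = w z₀ := by
        rw [hre₂ 0]; norm_num
      rw [h00, hre₂ t]; exact ht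
    have h₂ := aux_lower g₂ hg₂ z₀.im z₀.re hmin₂
    have hharm := hy.2 z₀ hz₀ball
    rw [h2d, h2d] at hharm
    have e₁ : deriv (deriv fun t : ℝ => y (z₀ + (t:ℂ))) 0 = deriv (deriv g₁) 0 := rfl
    have e₂ : deriv (deriv fun t : ℝ => y (z₀ + (t:ℂ) * Complex.I)) 0
        = deriv (deriv g₂) 0 := rfl
    rw [e₁, e₂] at hharm
    linarith

lemma HarmOn.neg' {y : ℂ → ℝ} {U : Set ℂ} (hy : HarmOn y U) : HarmOn (fun z => -y z) U := by
  refine ⟨hy.1.neg, fun z hz => ?_⟩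
  have h1 : (fun t : ℝ => -y (z + (t:ℂ))) = fun t : ℝ => -((fun t : ℝ => y (z + (t:ℂ))) t) := rfl
  beta_reduce
  rw [iteratedDeriv_fun_neg, iteratedDeriv_fun_neg]
  have := hy.2 z hz
  linarith


/-- There is no proper harmonic map from the open unit disk into the flat cylinder
`(ℝ/Tℤ) × ℝ`: no pair of harmonic functions `x, y` on `𝔻` makes
`p ↦ (x p mod T, y p)` proper. -/
theorem no_proper_harmonic_map_to_cylinder (T : ℝ) (hT : 0 < T) :
    ¬ ∃ x y : ℂ → ℝ, HarmOn x (Metric.ball (0 : ℂ) 1) ∧ HarmOn y (Metric.ball (0 : ℂ) 1) ∧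
      IsProperMap (fun p : Metric.ball (0 : ℂ) 1 =>
        (((x p : ℝ) : AddCircle T), y p)) := by
  rintro ⟨x, y, hx, hy, hproper⟩
  haveI : Fact (0 < T) := ⟨hT⟩
  set c : ℝ := |y 0| + 1 with hc
  have hcpos : 0 < c := by positivity
  -- the sublevel set of |y| is compact
  have hKcpt : IsCompact ((fun p : Metric.ball (0 : ℂ) 1 =>
      (((x p : ℝ) : AddCircle T), y p)) ⁻¹' (Set.univ ×ˢ Set.Icc (-c) c)) :=
    hproper.isCompact_preimage (isCompact_univ.prod isCompact_Icc)
  set K : Set ℂ := Subtype.val '' ((fun p : Metric.ball (0 : ℂ) 1 =>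
      (((x p : ℝ) : AddCircle T), y p)) ⁻¹' (Set.univ ×ˢ Set.Icc (-c) c)) with hKdef
  have hK : IsCompact K := hKcpt.image continuous_subtype_val
  have hKsub : K ⊆ Metric.ball (0:ℂ) 1 := by
    rintro z ⟨p, _, rfl⟩; exact p.2
  -- bound K away from the boundary
  obtain ⟨r, hr0, hr1, hrK⟩ : ∃ r : ℝ, 0 ≤ r ∧ r < 1 ∧ ∀ z ∈ K, ‖z‖ ≤ r := by
    rcases K.eq_empty_or_nonempty with h | h
    · exact ⟨0, le_refl 0, by norm_num, by simp [h]⟩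
    · obtain ⟨z, hzK, hmax⟩ := hK.exists_isMaxOn h continuous_norm.continuousOn
      refine ⟨‖z‖, norm_nonneg z, ?_, fun w hw => hmax hw⟩
      exact mem_ball_zero_iff.mp (hKsub hzK)
  set r' : ℝ := (r + 1) / 2 with hr'
  have hr'0 : 0 ≤ r' := by positivity
  have hr'1 : r' < 1 := by rw [hr']; linarith
  have hrr' : r < r' := by rw [hr']; linarith
  -- on the sphere of radius r', |y| > c
  have hsphere : ∀ z ∈ Metric.sphere (0:ℂ) r', c < |y z| := by
    intro z hz
    have hznorm : ‖z‖ = r' := mem_sphere_zero_iff_norm.mp hz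
    have hzball : z ∈ Metric.ball (0:ℂ) 1 := mem_ball_zero_iff.mpr (hznorm ▸ hr'1)
    by_contra hcon
    push_neg at hcon
    have : z ∈ K := ⟨⟨z, hzball⟩, ⟨Set.mem_univ _, abs_le.mp hcon⟩, rfl⟩
    have := hrK z this
    rw [hznorm] at this
    linarith
  -- the sphere is connected, so y has constant sign there
  have hconn : IsPreconnected (Metric.sphere (0:ℂ) r') := by
    refine (isConnected_sphere ?_ 0 hr'0).isPreconnected
    rw [Complex.rank_real_complex]
    norm_num
  obtain ⟨z₁, hz₁⟩ : (Metric.sphere (0:ℂ) r').Nonempty :=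
    NormedSpace.sphere_nonempty.mpr hr'0
  have hycont : ContinuousOn y (Metric.sphere (0:ℂ) r') := by
    apply hy.1.continuousOn.mono
    intro z hz
    exact mem_ball_zero_iff.mpr ((mem_sphere_zero_iff_norm.mp hz) ▸ hr'1)
  have hsign : (∀ z ∈ Metric.sphere (0:ℂ) r', c < y z) ∨
      (∀ z ∈ Metric.sphere (0:ℂ) r', y z < -c) := by
    rcases lt_or_ge c (y z₁) with h₁ | h₁
    · left
      intro z₂ hz₂
      by_contra hcon
      push_neg at hcon
      have h₂ : y z₂ < -c := by
        rcases lt_abs.mp (hsphere z₂ hz₂) with h | h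
        · linarith
        · linarith
      have hIcc : Set.Icc (y z₂) (y z₁) ⊆ y '' Metric.sphere (0:ℂ) r' :=
        hconn.intermediate_value hz₂ hz₁ hycont
      obtain ⟨z₃, hz₃, hz₃0⟩ := hIcc (show (0:ℝ) ∈ Set.Icc (y z₂) (y z₁) from
        ⟨by linarith, by linarith⟩)
      have := hsphere z₃ hz₃
      rw [hz₃0, abs_zero] at this
      linarith
    · right
      intro z₂ hz₂
      have hz₁' : y z₁ < -c := by
        rcases lt_abs.mp (hsphere z₁ hz₁) with h | h
        · linarith
        · linarith
      by_contra hcon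
      push_neg at hcon
      have hIcc : Set.Icc (y z₁) (y z₂) ⊆ y '' Metric.sphere (0:ℂ) r' :=
        hconn.intermediate_value hz₁ hz₂ hycont
      have hgt : c < y z₂ := by
        rcases lt_abs.mp (hsphere z₂ hz₂) with h | h
        · exact h
        · linarith
      obtain ⟨z₃, hz₃, hz₃0⟩ := hIcc (show (0:ℝ) ∈ Set.Icc (y z₁) (y z₂) from
        ⟨by linarith, by linarith⟩)
      have := hsphere z₃ hz₃
      rw [hz₃0, abs_zero] at this
      linarith
  rcases hsign with hpos | hneg
  · obtain ⟨z, hz, hzle⟩ := key y hy r' hr'0 hr'1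
    have := hpos z hz
    have hy0 : y 0 ≤ |y 0| := le_abs_self _
    rw [hc] at this
    linarith
  · obtain ⟨z, hz, hzle⟩ := key (fun z => -y z) hy.neg' r' hr'0 hr'1
    have := hneg z hz
    have hy0 : -y 0 ≤ |y 0| := neg_le_abs _
    have hzle' : -y z ≤ -y 0 + 1 := hzle
    rw [hc] at this
    linarith
end
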